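/- arXiv:1312.1714 — 3 statements merged into one kernel-verified Lean document; each statement's English description precedes it below -/
import Mathlib

section
/- For every ε > 0 there exists a constant C > 0 such that for every integer q > 1 and every positive definite matrix Λ ∈ M_{3,3}(ℤ) whose diagonal entries satisfy Λ_{1,1}, Λ_{2,2}, Λ_{3,3} ≤ 3q², the number of triples (x,y,z) ∈ (ℤ³)³ whose Gram matrix equals Λ is at most C · q^{ε} times the number of pairs (x,y) ∈ (ℤ³)² satisfying ⟨x,x⟩ = Λ_{1,1}, ⟨x,y⟩ = Λ_{1,2}, and ⟨y,y⟩ = Λ_{2,2}. -/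
open Matrix

namespace TLP

def cw (x y : Fin 3 → ℤ) : Fin 3 → ℤ :=
  ![x 1 * y 2 - x 2 * y 1, x 2 * y 0 - x 0 * y 2, x 0 * y 1 - x 1 * y 0]

lemma dp3 (a b : Fin 3 → ℤ) : a ⬝ᵥ b = a 0 * b 0 + a 1 * b 1 + a 2 * b 2 := by
  simp [dotProduct, Fin.sum_univ_three]

lemma lagrange (x y : Fin 3 → ℤ) :
    cw x y ⬝ᵥ cw x y = (x ⬝ᵥ x) * (y ⬝ᵥ y) - (x ⬝ᵥ y) ^ 2 := by
  simp only [dp3, cw, Matrix.cons_val_zero, Matrix.cons_val_one, Matrix.head_cons,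
    Matrix.cons_val_two, Matrix.tail_cons]; ring

lemma I1 (d x y : Fin 3 → ℤ) :
    (d ⬝ᵥ d) * (cw x y ⬝ᵥ cw x y) =
      (d ⬝ᵥ cw x y) ^ 2 + (d ⬝ᵥ y) ^ 2 * (x ⬝ᵥ x)
        - 2 * (d ⬝ᵥ x) * (d ⬝ᵥ y) * (x ⬝ᵥ y) + (d ⬝ᵥ x) ^ 2 * (y ⬝ᵥ y) := by
  simp only [dp3, cw, Matrix.cons_val_zero, Matrix.cons_val_one, Matrix.head_cons,
    Matrix.cons_val_two, Matrix.tail_cons]; ring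

lemma I2 (d e x y : Fin 3 → ℤ) :
    (cw x y ⬝ᵥ cw x y) * (d ⬝ᵥ e) =
      (d ⬝ᵥ cw x y) * (cw x y ⬝ᵥ e)
      + (d ⬝ᵥ y) * ((x ⬝ᵥ x) * (y ⬝ᵥ e) - (x ⬝ᵥ y) * (x ⬝ᵥ e))
      - (d ⬝ᵥ x) * ((x ⬝ᵥ y) * (y ⬝ᵥ e) - (y ⬝ᵥ y) * (x ⬝ᵥ e)) := by
  simp only [dp3, cw, Matrix.cons_val_zero, Matrix.cons_val_one, Matrix.head_cons,
    Matrix.cons_val_two, Matrix.tail_cons]; ring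

end TLP

namespace TLP2
open TLP

lemma inj {x y z₁ z₂ : Fin 3 → ℤ} (hW : 0 < cw x y ⬝ᵥ cw x y)
    (h1 : z₁ ⬝ᵥ x = z₂ ⬝ᵥ x) (h2 : z₁ ⬝ᵥ y = z₂ ⬝ᵥ y)
    (hw : z₁ ⬝ᵥ cw x y = z₂ ⬝ᵥ cw x y) : z₁ = z₂ := by
  have hdx : (z₁ - z₂) ⬝ᵥ x = 0 := by rw [sub_dotProduct, h1, sub_self]
  have hdy : (z₁ - z₂) ⬝ᵥ y = 0 := by rw [sub_dotProduct, h2, sub_self]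
  have hdw : (z₁ - z₂) ⬝ᵥ cw x y = 0 := by rw [sub_dotProduct, hw, sub_self]
  have hI := I1 (z₁ - z₂) x y
  rw [hdx, hdy, hdw] at hI
  simp only [ne_eq, OfNat.ofNat_ne_zero, not_false_eq_true, zero_pow, mul_zero, zero_mul,
    add_zero, sub_zero, zero_add] at hI
  have hdd : (z₁ - z₂) ⬝ᵥ (z₁ - z₂) = 0 := by
    rcases mul_eq_zero.mp hI with h | h
    · exact h
    · exact absurd h hW.ne'
  rw [dp3] at hdd
  have h0 : z₁ 0 - z₂ 0 = 0 ∧ z₁ 1 - z₂ 1 = 0 ∧ z₁ 2 - z₂ 2 = 0 := by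
    simp only [Pi.sub_apply] at hdd
    refine ⟨?_, ?_, ?_⟩ <;>
      nlinarith [mul_self_nonneg (z₁ 0 - z₂ 0), mul_self_nonneg (z₁ 1 - z₂ 1),
        mul_self_nonneg (z₁ 2 - z₂ 2)]
  funext i
  fin_cases i
  · exact sub_eq_zero.mp h0.1
  · exact sub_eq_zero.mp h0.2.1
  · exact sub_eq_zero.mp h0.2.2

lemma twoval {x y z₁ z₂ : Fin 3 → ℤ}
    (h1 : z₁ ⬝ᵥ x = z₂ ⬝ᵥ x) (h2 : z₁ ⬝ᵥ y = z₂ ⬝ᵥ y)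
    (hc : z₁ ⬝ᵥ z₁ = z₂ ⬝ᵥ z₂) :
    z₁ ⬝ᵥ cw x y = z₂ ⬝ᵥ cw x y ∨ z₁ ⬝ᵥ cw x y = -(z₂ ⬝ᵥ cw x y) := by
  have hdx : (z₁ - z₂) ⬝ᵥ x = 0 := by rw [sub_dotProduct, h1, sub_self]
  have hdy : (z₁ - z₂) ⬝ᵥ y = 0 := by rw [sub_dotProduct, h2, sub_self]
  have hnorm : (z₁ - z₂) ⬝ᵥ (z₁ - z₂) + 2 * ((z₁ - z₂) ⬝ᵥ z₂) = 0 := by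
    simp only [dp3, Pi.sub_apply]
    simp only [dp3] at hc
    linear_combination hc
  have hI1 := I1 (z₁ - z₂) x y
  rw [hdx, hdy] at hI1
  have hI2 := I2 (z₁ - z₂) z₂ x y
  rw [hdx, hdy] at hI2
  rw [dotProduct_comm (cw x y) z₂] at hI2
  have key : ((z₁ - z₂) ⬝ᵥ cw x y) * ((z₁ - z₂) ⬝ᵥ cw x y + 2 * (z₂ ⬝ᵥ cw x y)) = 0 := by
    linear_combination (-1 : ℤ) * hI1 - 2 * hI2 + (cw x y ⬝ᵥ cw x y) * hnorm
  rw [sub_dotProduct] at key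
  rcases mul_eq_zero.mp key with h | h
  · left; linarith
  · right; linarith

end TLP2

namespace TLP3
open TLP TLP2

lemma int_le_sq (a : ℤ) : a ≤ a * a := by rcases le_or_gt a 0 with h | h <;> nlinarith

lemma int_neg_le_sq (a : ℤ) : -a ≤ a * a := by rcases le_or_gt a 0 with h | h <;> nlinarith

lemma finSphere (n : ℤ) : {v : Fin 3 → ℤ | v ⬝ᵥ v = n}.Finite := by
  apply Set.Finite.subset (Set.Finite.pi (fun _ : Fin 3 => Set.finite_Icc (-n) n))
  intro v hv
  simp only [Set.mem_setOf_eq, dp3] at hv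
  intro i _
  simp only [Set.mem_Icc]
  have hb : ∀ j : Fin 3, -n ≤ v j ∧ v j ≤ n := by
    have hints := And.intro (int_le_sq (v 0)) (And.intro (int_le_sq (v 1))
      (And.intro (int_le_sq (v 2)) (And.intro (int_neg_le_sq (v 0))
      (And.intro (int_neg_le_sq (v 1)) (And.intro (int_neg_le_sq (v 2))
      (And.intro (mul_self_nonneg (v 0)) (And.intro (mul_self_nonneg (v 1))
      (mul_self_nonneg (v 2)))))))))
    obtain ⟨a1, a2, a3, a4, a5, a6, a7, a8, a9⟩ := hints
    have b0 : -n ≤ v 0 ∧ v 0 ≤ n := ⟨by linarith, by linarith⟩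
    have b1 : -n ≤ v 1 ∧ v 1 ≤ n := ⟨by linarith, by linarith⟩
    have b2 : -n ≤ v 2 ∧ v 2 ≤ n := ⟨by linarith, by linarith⟩
    intro j
    fin_cases j
    · exact b0
    · exact b1
    · exact b2
  exact hb i

end TLP3

open TLP TLP2 TLP3 in
/-- For every `ε > 0` there is `C > 0` such that for every integer `q > 1` and every
positive definite `Λ ∈ M₃,₃(ℤ)` with diagonal entries at most `3q²`, the number of
triples `(x,y,z) ∈ (ℤ³)³` with Gram matrix `Λ` is at most `C·q^ε` times the number of
pairs `(x,y) ∈ (ℤ³)²` with `⟨x,x⟩ = Λ₁₁`, `⟨x,y⟩ = Λ₁₂`, `⟨y,y⟩ = Λ₂₂`. -/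
theorem triples_le_pairs :
    ∀ ε : ℝ, 0 < ε → ∃ C : ℝ, 0 < C ∧ ∀ q : ℕ, 1 < q →
      ∀ Λ : Matrix (Fin 3) (Fin 3) ℤ, Λ.PosDef →
        (∀ i, Λ i i ≤ 3 * (q : ℤ) ^ 2) →
        (Nat.card {t : Fin 3 → (Fin 3 → ℤ) // ∀ i j, t i ⬝ᵥ t j = Λ i j} : ℝ) ≤
          C * (q : ℝ) ^ ε *
            (Nat.card {xy : (Fin 3 → ℤ) × (Fin 3 → ℤ) //
              xy.1 ⬝ᵥ xy.1 = Λ 0 0 ∧ xy.1 ⬝ᵥ xy.2 = Λ 0 1 ∧ xy.2 ⬝ᵥ xy.2 = Λ 1 1} : ℝ) := by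
  intro ε hε
  refine ⟨2, by norm_num, ?_⟩
  intro q hq Λ hΛ _hdiag
  set P := {xy : (Fin 3 → ℤ) × (Fin 3 → ℤ) //
      xy.1 ⬝ᵥ xy.1 = Λ 0 0 ∧ xy.1 ⬝ᵥ xy.2 = Λ 0 1 ∧ xy.2 ⬝ᵥ xy.2 = Λ 1 1} with hP
  set T := {t : Fin 3 → (Fin 3 → ℤ) // ∀ i j, t i ⬝ᵥ t j = Λ i j} with hT
  -- positivity facts
  have hsymm : Λ 1 0 = Λ 0 1 := by
    have := hΛ.1
    have h2 := congrFun (congrFun this 0) 1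
    simpa [Matrix.conjTranspose_apply] using h2
  have h11 : 0 < Λ 1 1 := by
    have hv : (![0, 1, 0] : Fin 3 → ℤ) ≠ 0 := by
      intro h
      have := congrFun h 1
      simp at this
    have := hΛ.dotProduct_mulVec_pos (x := ![0, 1, 0]) hv
    simpa [dotProduct, Matrix.mulVec, Fin.sum_univ_three] using this
  have hdet2 : 0 < Λ 0 0 * Λ 1 1 - Λ 0 1 ^ 2 := by
    have hv : (![Λ 1 1, -(Λ 0 1), 0] : Fin 3 → ℤ) ≠ 0 := by
      intro h
      have := congrFun h 0
      simp at this
      omega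
    have hform := hΛ.dotProduct_mulVec_pos (x := ![Λ 1 1, -(Λ 0 1), 0]) hv
    simp only [dotProduct, Matrix.mulVec, Fin.sum_univ_three, Matrix.cons_val_zero,
      Matrix.cons_val_one, Matrix.head_cons, Matrix.cons_val_two, Matrix.tail_cons,
      star_trivial] at hform
    rw [hsymm] at hform
    nlinarith [hform, h11]
  -- finiteness of P
  have hPsetfin : {xy : (Fin 3 → ℤ) × (Fin 3 → ℤ) |
      xy.1 ⬝ᵥ xy.1 = Λ 0 0 ∧ xy.1 ⬝ᵥ xy.2 = Λ 0 1 ∧ xy.2 ⬝ᵥ xy.2 = Λ 1 1}.Finite := by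
    apply Set.Finite.subset ((finSphere (Λ 0 0)).prod (finSphere (Λ 1 1)))
    rintro ⟨x, y⟩ ⟨hx, -, hy⟩
    exact ⟨hx, hy⟩
  haveI hPfin : Finite P := hPsetfin.to_subtype
  -- the injection
  have hWgen : ∀ t : T, 0 < cw (t.1 0) (t.1 1) ⬝ᵥ cw (t.1 0) (t.1 1) := by
    intro t
    rw [lagrange, t.2 0 0, t.2 1 1, t.2 0 1]
    exact hdet2
  let F : T → P × Bool := fun t =>
    (⟨(t.1 0, t.1 1), t.2 0 0, t.2 0 1, t.2 1 1⟩,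
      decide (0 ≤ t.1 2 ⬝ᵥ cw (t.1 0) (t.1 1)))
  have hF : Function.Injective F := by
    intro t t' h
    have hpair : (t.1 0, t.1 1) = (t'.1 0, t'.1 1) := by
      have := congrArg Prod.fst h
      exact Subtype.ext_iff.mp this
    have hx : t.1 0 = t'.1 0 := congrArg Prod.fst hpair
    have hy : t.1 1 = t'.1 1 := congrArg Prod.snd hpair
    have hbool : decide (0 ≤ t.1 2 ⬝ᵥ cw (t.1 0) (t.1 1))
        = decide (0 ≤ t'.1 2 ⬝ᵥ cw (t'.1 0) (t'.1 1)) := congrArg Prod.snd h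
    rw [← hx, ← hy] at hbool
    have h1 : t.1 2 ⬝ᵥ t.1 0 = t'.1 2 ⬝ᵥ t.1 0 := by
      rw [t.2 2 0]; conv_rhs => rw [hx]
      rw [t'.2 2 0]
    have h2 : t.1 2 ⬝ᵥ t.1 1 = t'.1 2 ⬝ᵥ t.1 1 := by
      rw [t.2 2 1]; conv_rhs => rw [hy]
      rw [t'.2 2 1]
    have hc : t.1 2 ⬝ᵥ t.1 2 = t'.1 2 ⬝ᵥ t'.1 2 := by rw [t.2 2 2, t'.2 2 2]
    have hz : t.1 2 = t'.1 2 := by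
      rcases twoval h1 h2 hc with hw | hw
      · exact inj (hWgen t) h1 h2 hw
      · have hiff := decide_eq_decide.mp hbool
        have hzero : t.1 2 ⬝ᵥ cw (t.1 0) (t.1 1) = t'.1 2 ⬝ᵥ cw (t.1 0) (t.1 1) := by omega
        exact inj (hWgen t) h1 h2 hzero
    apply Subtype.ext
    funext i
    fin_cases i
    · exact hx
    · exact hy
    · exact hz
  have hcard : Nat.card T ≤ 2 * Nat.card P := by
    have := Nat.card_le_card_of_injective F hF
    rwa [Nat.card_prod, Nat.card_eq_fintype_card (α := Bool), Fintype.card_bool,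
      mul_comm] at this
  -- conclude
  have hq1 : (1 : ℝ) ≤ (q : ℝ) ^ ε := by
    apply Real.one_le_rpow
    · exact_mod_cast hq.le
    · exact hε.le
  have hTr : (Nat.card T : ℝ) ≤ 2 * (Nat.card P : ℝ) := by exact_mod_cast hcard
  have hPnn : (0 : ℝ) ≤ (Nat.card P : ℝ) := Nat.cast_nonneg _
  nlinarith [hTr, hq1, hPnn]
end

section
/- For every ε > 0 there exists a constant c > 0 such that for every integer q > 1, the number of integers r with 1 ≤ r ≤ q² and M_r ≥ q/2 is at least c · q^{2−ε}. -/
open Matrix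

/-- `M r`: the number of lattice points on the sphere of radius `√r` centered at the
origin, i.e. `#{x ∈ ℤ³ : x₁² + x₂² + x₃² = r}`. -/
noncomputable def latticePointsOnSphere (r : ℕ) : ℕ :=
  Nat.card {x : Fin 3 → ℤ // x ⬝ᵥ x = (r : ℤ)}

namespace ManyRich

open Finset

noncomputable def box (Q : ℕ) : Finset (Fin 3 → ℤ) := Fintype.piFinset fun _ => Finset.Icc (-(Q:ℤ)) (Q:ℤ)

lemma mem_box {Q : ℕ} {v : Fin 3 → ℤ} : v ∈ box Q ↔ ∀ i, -(Q:ℤ) ≤ v i ∧ v i ≤ Q := by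
  simp [box, Fintype.mem_piFinset, Finset.mem_Icc]

lemma card_box (Q : ℕ) : (box Q).card = (2*Q+1)^3 := by
  simp [box, Fintype.card_piFinset, Int.card_Icc]
  omega

lemma dot_eq (x y : Fin 3 → ℤ) : x ⬝ᵥ y = x 0 * y 0 + x 1 * y 1 + x 2 * y 2 := by
  simp [dotProduct, Fin.sum_univ_three]

lemma int_le_mul_self (a : ℤ) : a ≤ a * a := by
  rcases le_or_gt a 0 with h | h
  · nlinarith
  · nlinarith

lemma int_neg_le_mul_self (a : ℤ) : -a ≤ a * a := by
  have := int_le_mul_self (-a); nlinarith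

noncomputable def sph (r : ℕ) : Finset (Fin 3 → ℤ) := (box r).filter fun x => x ⬝ᵥ x = (r:ℤ)

lemma mem_sph {r : ℕ} {x : Fin 3 → ℤ} : x ∈ sph r ↔ x ⬝ᵥ x = (r:ℤ) := by
  constructor
  · intro h; exact (Finset.mem_filter.mp h).2
  · intro h
    refine Finset.mem_filter.mpr ⟨mem_box.mpr fun i => ?_, h⟩
    have h3 : x 0 * x 0 ≤ (r:ℤ) ∧ x 1 * x 1 ≤ (r:ℤ) ∧ x 2 * x 2 ≤ (r:ℤ) := by
      rw [dot_eq] at h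
      refine ⟨by nlinarith [mul_self_nonneg (x 1), mul_self_nonneg (x 2)],
        by nlinarith [mul_self_nonneg (x 0), mul_self_nonneg (x 2)],
        by nlinarith [mul_self_nonneg (x 0), mul_self_nonneg (x 1)]⟩
    have h2 : x i * x i ≤ (r:ℤ) := by
      fin_cases i
      · exact h3.1
      · exact h3.2.1
      · exact h3.2.2
    exact ⟨by linarith [int_neg_le_mul_self (x i)], by linarith [int_le_mul_self (x i)]⟩

lemma M_eq (r : ℕ) : latticePointsOnSphere r = (sph r).card := by
  have hset : {x : Fin 3 → ℤ | x ⬝ᵥ x = (r:ℤ)} = ↑(sph r) := by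
    ext x; simp [Set.mem_setOf_eq, mem_sph]
  calc latticePointsOnSphere r
      = ({x : Fin 3 → ℤ | x ⬝ᵥ x = (r:ℤ)}).ncard := Nat.card_coe_set_eq _
    _ = ((sph r : Set (Fin 3 → ℤ))).ncard := by rw [hset]
    _ = (sph r).card := Set.ncard_coe_finset _

/-- Core interval-counting lemma: a set of integers in `[a,b]`, pairwise congruent
mod `n`, has at most `(b-a)/n + 1` elements. -/
lemma card_le_of_diff_dvd (S : Finset ℤ) (a b n : ℤ) (hn : 0 < n) (hab : a ≤ b)
    (hS : ∀ w ∈ S, a ≤ w ∧ w ≤ b)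
    (hd : ∀ w ∈ S, ∀ w' ∈ S, n ∣ w - w') :
    (S.card : ℝ) ≤ (b - a)/n + 1 := by
  have key : S.card ≤ (Finset.Icc (0:ℤ) ((b-a)/n)).card := by
    apply Finset.card_le_card_of_injOn (fun w => (w - a)/n)
    · intro w hw
      obtain ⟨h1, h2⟩ := hS w hw
      rw [Finset.mem_coe, Finset.mem_Icc]
      exact ⟨Int.ediv_nonneg (by linarith) hn.le, Int.ediv_le_ediv hn (by linarith)⟩
    · intro w hw w' hw' h
      have hdvd : n ∣ (w - a) - (w' - a) := by
        have := hd w hw w' hw'; simpa using this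
      have hmod : (w - a) % n = (w' - a) % n :=
        Int.emod_eq_emod_iff_emod_sub_eq_zero.mpr (Int.emod_eq_zero_of_dvd hdvd)
      have e1 := Int.mul_ediv_add_emod (w - a) n
      have e2 := Int.mul_ediv_add_emod (w' - a) n
      simp only at h
      rw [h, hmod] at e1
      linarith
  have h2 : ((Finset.Icc (0:ℤ) ((b-a)/n)).card : ℝ) ≤ (b-a)/n + 1 := by
    rw [Int.card_Icc]
    have hnn : 0 ≤ (b-a)/n := Int.ediv_nonneg (by linarith) hn.le
    have htn : (((b - a) / n + 1 - 0).toNat : ℤ) = (b-a)/n + 1 := by omega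
    have hle : (((b-a)/n : ℤ) : ℝ) ≤ (b-a)/n := by
      rw [le_div_iff₀ (by exact_mod_cast hn)]
      have := Int.ediv_mul_le (b-a) hn.ne'
      exact_mod_cast this
    have : (((b - a) / n + 1 - 0).toNat : ℝ) = (((b-a)/n : ℤ) : ℝ) + 1 := by
      exact_mod_cast congrArg Int.cast htn
    rw [this]
    linarith
  calc (S.card : ℝ) ≤ ((Finset.Icc (0:ℤ) ((b-a)/n)).card : ℝ) := by exact_mod_cast key
    _ ≤ (b - a)/n + 1 := h2


/-- Cancel a gcd: if `y ∣ x * d` then `y / gcd x y ∣ d`. -/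
lemma nat_gcd_cancel {x y : ℕ} (d : ℕ) (hy : 0 < y) (hdvd : y ∣ x * d) :
    y / Nat.gcd x y ∣ d := by
  rcases Nat.eq_zero_or_pos x with hx | hx
  · subst hx
    simp only [Nat.gcd_zero_left, Nat.div_self hy]
    exact one_dvd _
  set h := Nat.gcd x y with hhdef
  have hpos : 0 < h := Nat.gcd_pos_of_pos_left _ hx
  have hxd : h ∣ x := Nat.gcd_dvd_left _ _
  have hyd : h ∣ y := Nat.gcd_dvd_right _ _
  have hcop : Nat.Coprime (x / h) (y / h) := Nat.coprime_div_gcd_div_gcd hpos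
  have h1 : h * (y / h) ∣ h * ((x / h) * d) := by
    rw [Nat.mul_div_cancel' hyd, ← mul_assoc, Nat.mul_div_cancel' hxd]
    exact hdvd
  have h2 : y / h ∣ (x / h) * d := (Nat.mul_dvd_mul_iff_left hpos).mp h1
  exact hcop.symm.dvd_of_dvd_mul_left h2

/-- Count of `(v,w)` in a box with `m ∣ a v + b w`. -/
lemma pairs_card_le (Q m : ℕ) (hm : 0 < m) (a b : ℤ) :
    ((((Finset.Icc (-(Q:ℤ)) (Q:ℤ)) ×ˢ (Finset.Icc (-(Q:ℤ)) (Q:ℤ))).filter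
        fun p => (m:ℤ) ∣ a * p.1 + b * p.2).card : ℝ)
      ≤ 4*(Q:ℝ)^2 * (Nat.gcd a.natAbs (Nat.gcd b.natAbs m)) / m + 4*Q + 1 := by
  set g : ℕ := Nat.gcd b.natAbs m with hgdef
  set hcf : ℕ := Nat.gcd a.natAbs g with hcfdef
  have hgpos : 0 < g := Nat.gcd_pos_of_pos_right _ hm
  have hcfpos : 0 < hcf := Nat.gcd_pos_of_pos_right _ hgpos
  have hcfg : hcf ∣ g := Nat.gcd_dvd_right _ _
  set g' : ℕ := g / hcf with hg'def
  have hg'pos : 0 < g' := Nat.div_pos (Nat.le_of_dvd hgpos hcfg) hcfpos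
  have hgm : g ∣ m := Nat.gcd_dvd_right _ _
  set m1 : ℕ := m / g with hm1def
  have hm1pos : 0 < m1 := Nat.div_pos (Nat.le_of_dvd hm hgm) hgpos
  have hm_eq : m = g * m1 := by rw [hm1def, Nat.mul_div_cancel' hgm]
  set I : Finset ℤ := Finset.Icc (-(Q:ℤ)) (Q:ℤ) with hIdef
  set E := (I ×ˢ I).filter (fun p => (m:ℤ) ∣ a * p.1 + b * p.2) with hEdef
  set A : Finset ℤ := I.filter (fun v => (g':ℤ) ∣ v) with hAdef
  have hfst : ∀ p ∈ E, p.1 ∈ A := by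
    intro p hp
    rw [hEdef, Finset.mem_filter, Finset.mem_product] at hp
    obtain ⟨⟨h1, _⟩, hdvd⟩ := hp
    rw [hAdef, Finset.mem_filter]
    refine ⟨h1, ?_⟩
    have hga : (g:ℤ) ∣ a * p.1 := by
      have h3 : (g:ℤ) ∣ (m:ℤ) := Int.natCast_dvd_natCast.mpr hgm
      have h4 : (g:ℤ) ∣ b := Int.natCast_dvd.mpr (Nat.gcd_dvd_left _ _)
      have h5 := dvd_sub (h3.trans hdvd) (h4.mul_right p.2)
      simpa using h5
    have hga' : g ∣ a.natAbs * p.1.natAbs := by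
      have := Int.natCast_dvd.mp hga
      rwa [Int.natAbs_mul] at this
    have := nat_gcd_cancel p.1.natAbs hgpos hga'
    rw [← hcfdef, ← hg'def] at this
    exact Int.natCast_dvd.mpr this
  have hcard : E.card = ∑ v ∈ A, (E.filter (fun p => p.1 = v)).card :=
    Finset.card_eq_sum_card_fiberwise hfst
  have hfiber : ∀ v ∈ A, ((E.filter (fun p => p.1 = v)).card : ℝ) ≤ 2*(Q:ℝ)/m1 + 1 := by
    intro v _
    have hsub : (E.filter (fun p => p.1 = v)).card
        ≤ (I.filter (fun w => (m:ℤ) ∣ a * v + b * w)).card := by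
      apply Finset.card_le_card_of_injOn (fun p => p.2)
      · intro p hp
        rw [Finset.mem_coe, Finset.mem_filter] at hp
        obtain ⟨hpE, hpv⟩ := hp
        rw [hEdef, Finset.mem_filter, Finset.mem_product] at hpE
        rw [Finset.mem_coe, Finset.mem_filter]
        exact ⟨hpE.1.2, by rw [← hpv]; exact hpE.2⟩
      · intro p hp p' hp' hpp
        simp only [Finset.coe_filter, Set.mem_setOf_eq] at hp hp'
        have e1 := hp.2; have e2 := hp'.2
        exact Prod.ext (by rw [e1, e2]) hpp
    have hC := card_le_of_diff_dvd (I.filter fun w => (m:ℤ) ∣ a * v + b * w)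
      (-(Q:ℤ)) (Q:ℤ) (m1:ℤ) (by exact_mod_cast hm1pos)
      (by linarith [Int.natCast_nonneg Q])
      (by
        intro w hw
        rw [Finset.mem_filter, hIdef, Finset.mem_Icc] at hw
        exact hw.1)
      (by
        intro w hw w' hw'
        rw [Finset.mem_filter] at hw hw'
        have hmd : (m:ℤ) ∣ b * (w - w') := by
          have h6 := dvd_sub hw.2 hw'.2
          have e : (a*v+b*w) - (a*v+b*w') = b*(w-w') := by ring
          rwa [e] at h6
        have hnat : m ∣ b.natAbs * (w - w').natAbs := by
          have := Int.natCast_dvd.mp hmd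
          rwa [Int.natAbs_mul] at this
        have := nat_gcd_cancel (w - w').natAbs hm hnat
        rw [← hgdef, ← hm1def] at this
        exact Int.natCast_dvd.mpr this)
    have hC' : ((I.filter fun w => (m:ℤ) ∣ a * v + b * w).card : ℝ) ≤ 2*(Q:ℝ)/m1 + 1 := by
      refine le_trans hC (le_of_eq ?_)
      push_cast
      ring
    calc ((E.filter (fun p => p.1 = v)).card : ℝ)
        ≤ ((I.filter (fun w => (m:ℤ) ∣ a * v + b * w)).card : ℝ) := by exact_mod_cast hsub
      _ ≤ 2*(Q:ℝ)/m1 + 1 := hC'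
  have hA : ((A.card : ℝ)) ≤ 2*(Q:ℝ)/g' + 1 := by
    have hC := card_le_of_diff_dvd A (-(Q:ℤ)) (Q:ℤ) (g':ℤ)
      (by exact_mod_cast hg'pos) (by linarith [Int.natCast_nonneg Q])
      (fun w hw => by rw [hAdef, Finset.mem_filter, hIdef, Finset.mem_Icc] at hw; exact hw.1)
      (fun w hw w' hw' => by
        rw [hAdef, Finset.mem_filter] at hw hw'
        exact dvd_sub hw.2 hw'.2)
    refine le_trans hC (le_of_eq ?_)
    push_cast
    ring
  have hE2 : (E.card : ℝ) ≤ (2*(Q:ℝ)/g' + 1) * (2*(Q:ℝ)/m1 + 1) := by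
    calc (E.card : ℝ) = ∑ v ∈ A, ((E.filter (fun p => p.1 = v)).card : ℝ) := by
          rw [hcard]; push_cast; rfl
      _ ≤ ∑ v ∈ A, (2*(Q:ℝ)/m1 + 1) := Finset.sum_le_sum hfiber
      _ = A.card * (2*(Q:ℝ)/m1 + 1) := by rw [Finset.sum_const, nsmul_eq_mul]
      _ ≤ (2*(Q:ℝ)/g' + 1) * (2*(Q:ℝ)/m1 + 1) := by
          apply mul_le_mul_of_nonneg_right hA
          positivity
  have hmR : (m:ℝ) = hcf * g' * m1 := by
    have h1 : hcf * g' = g := Nat.mul_div_cancel' hcfg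
    have h2 : m = hcf * g' * m1 := by rw [h1]; exact hm_eq
    exact_mod_cast h2
  have hmpos : (0:ℝ) < m := by exact_mod_cast hm
  have hg'pos' : (1:ℝ) ≤ g' := by exact_mod_cast hg'pos
  have hm1pos' : (1:ℝ) ≤ m1 := by exact_mod_cast hm1pos
  have hQ0 : (0:ℝ) ≤ Q := Nat.cast_nonneg Q
  have key1 : 2*(Q:ℝ)/g' * (2*(Q:ℝ)/m1) = 4*(Q:ℝ)^2*hcf/m := by
    rw [hmR]
    have h1 : (g':ℝ) ≠ 0 := by positivity
    have h2 : (m1:ℝ) ≠ 0 := by positivity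
    have h3 : (hcf:ℝ) ≠ 0 := by positivity
    field_simp
    ring
  have key2 : 2*(Q:ℝ)/g' ≤ 2*Q := div_le_self (by positivity) hg'pos'
  have key3 : 2*(Q:ℝ)/m1 ≤ 2*Q := div_le_self (by positivity) hm1pos'
  have hx0 : (0:ℝ) ≤ 2*(Q:ℝ)/g' := by positivity
  have hy0 : (0:ℝ) ≤ 2*(Q:ℝ)/m1 := by positivity
  nlinarith [hE2, key1, key2, key3, hx0, hy0]


def Dg (u : Fin 3 → ℤ) : ℕ := Nat.gcd (u 0).natAbs (Nat.gcd (u 1).natAbs (u 2).natAbs)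

def Nu (u : Fin 3 → ℤ) : ℕ := max (max (u 0).natAbs (u 1).natAbs) (u 2).natAbs

lemma natAbs_le_Nu (w : Fin 3 → ℤ) (i : Fin 3) : (w i).natAbs ≤ Nu w := by
  have h0 : (w 0).natAbs ≤ Nu w := le_max_of_le_left (le_max_left _ _)
  have h1 : (w 1).natAbs ≤ Nu w := le_max_of_le_left (le_max_right _ _)
  have h2 : (w 2).natAbs ≤ Nu w := le_max_right _ _
  fin_cases i <;> assumption

lemma Nu_pos {w : Fin 3 → ℤ} (hw : w ≠ 0) : 0 < Nu w := by
  rcases Nat.eq_zero_or_pos (Nu w) with h | h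
  · exfalso
    apply hw
    funext t
    have := natAbs_le_Nu w t
    rw [h, Nat.le_zero, Int.natAbs_eq_zero] at this
    simpa using this
  · exact h

lemma Nu_exists (u : Fin 3 → ℤ) :
    (u 0).natAbs = Nu u ∨ (u 1).natAbs = Nu u ∨ (u 2).natAbs = Nu u := by
  unfold Nu
  rcases max_choice (max (u 0).natAbs (u 1).natAbs) (u 2).natAbs with h | h
  · rcases max_choice (u 0).natAbs (u 1).natAbs with h' | h'
    · left; rw [h, h']
    · right; left; rw [h, h']
  · right; right; rw [h]

lemma Dg_dvd (u : Fin 3 → ℤ) (i : Fin 3) : Dg u ∣ (u i).natAbs := by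
  have h0 : Dg u ∣ (u 0).natAbs := Nat.gcd_dvd_left _ _
  have h1 : Dg u ∣ (u 1).natAbs := (Nat.gcd_dvd_right _ _).trans (Nat.gcd_dvd_left _ _)
  have h2 : Dg u ∣ (u 2).natAbs := (Nat.gcd_dvd_right _ _).trans (Nat.gcd_dvd_right _ _)
  fin_cases i <;> assumption

lemma Dg_pos {u : Fin 3 → ℤ} (hu : u ≠ 0) : 0 < Dg u := by
  rcases Nat.eq_zero_or_pos (Dg u) with h | h
  · exfalso
    apply hu
    funext t
    have := Dg_dvd u t
    rw [h] at this
    have := Nat.eq_zero_of_zero_dvd this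
    rw [Int.natAbs_eq_zero] at this
    simpa using this
  · exact h

lemma Vu_le_aux (Q : ℕ) (u : Fin 3 → ℤ) (i j k : Fin 3)
    (hcover : ∀ t : Fin 3, t = i ∨ t = j ∨ t = k)
    (hij : i ≠ j) (hik : i ≠ k) (hjk : j ≠ k)
    (hi : u i ≠ 0) :
    (((box Q).filter fun v => u ⬝ᵥ v = 0).card : ℝ)
      ≤ 4*(Q:ℝ)^2 * (Nat.gcd (u j).natAbs (Nat.gcd (u k).natAbs (u i).natAbs)) / (u i).natAbs
        + 4*Q + 1 := by
  have hm : 0 < (u i).natAbs := Int.natAbs_pos.mpr hi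
  have hdot : ∀ v : Fin 3 → ℤ, u ⬝ᵥ v = u i * v i + u j * v j + u k * v k := by
    intro v
    have huniv : (Finset.univ : Finset (Fin 3)) = {i, j, k} := by
      ext t
      simp only [Finset.mem_univ, Finset.mem_insert, Finset.mem_singleton, true_iff]
      exact hcover t
    rw [dotProduct, huniv]
    rw [Finset.sum_insert (by simp [hij, hik]), Finset.sum_insert (by simp [hjk]),
      Finset.sum_singleton]
    ring
  have hinj : (((box Q).filter fun v => u ⬝ᵥ v = 0).card)
      ≤ ((((Finset.Icc (-(Q:ℤ)) (Q:ℤ)) ×ˢ (Finset.Icc (-(Q:ℤ)) (Q:ℤ))).filter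
          fun p => (((u i).natAbs : ℕ) : ℤ) ∣ (u j) * p.1 + (u k) * p.2)).card := by
    apply Finset.card_le_card_of_injOn (fun v => (v j, v k))
    · intro v hv
      rw [Finset.mem_coe, Finset.mem_filter] at hv
      obtain ⟨hbox, hdv⟩ := hv
      rw [mem_box] at hbox
      rw [Finset.mem_coe, Finset.mem_filter, Finset.mem_product, Finset.mem_Icc, Finset.mem_Icc]
      refine ⟨⟨hbox j, hbox k⟩, ?_⟩
      rw [Int.natAbs_dvd]
      refine ⟨-(v i), ?_⟩
      have hsum : u i * v i + u j * v j + u k * v k = 0 := (hdot v).symm.trans hdv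
      linear_combination hsum
    · intro v hv v' hv' hp
      simp only [Finset.coe_filter, Set.mem_setOf_eq] at hv hv'
      have hj' : v j = v' j := congrArg Prod.fst hp
      have hk' : v k = v' k := congrArg Prod.snd hp
      have hii : v i = v' i := by
        have h1 : u i * v i + u j * v j + u k * v k = 0 := (hdot v).symm.trans hv.2
        have h2 : u i * v' i + u j * v' j + u k * v' k = 0 := (hdot v').symm.trans hv'.2
        have h3 : u i * v i = u i * v' i := by rw [hj', hk'] at h1; linarith
        exact mul_left_cancel₀ hi h3
      funext t
      rcases hcover t with rfl | rfl | rfl <;> assumption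
  calc (((box Q).filter fun v => u ⬝ᵥ v = 0).card : ℝ)
      ≤ _ := by exact_mod_cast hinj
    _ ≤ _ := pairs_card_le Q ((u i).natAbs) hm (u j) (u k)
    _ = 4*(Q:ℝ)^2 * (Nat.gcd (u j).natAbs (Nat.gcd (u k).natAbs (u i).natAbs)) / (u i).natAbs
        + 4*Q + 1 := rfl

lemma Vu_le (Q : ℕ) (u : Fin 3 → ℤ) (hu : u ≠ 0) :
    (((box Q).filter fun v => u ⬝ᵥ v = 0).card : ℝ)
      ≤ 4*(Q:ℝ)^2 * (Dg u) / (Nu u) + 4*Q + 1 := by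
  have hNu := Nu_pos hu
  rcases Nu_exists u with hc | hc | hc
  · have hi : u 0 ≠ 0 := by
      rw [← Int.natAbs_pos, hc]; exact hNu
    have h := Vu_le_aux Q u 0 1 2 (fun t => by fin_cases t <;> simp) (by decide) (by decide)
      (by decide) hi
    have he : Nat.gcd (u 1).natAbs (Nat.gcd (u 2).natAbs (u 0).natAbs) = Dg u := by
      unfold Dg
      rw [Nat.gcd_comm (u 2).natAbs, ← Nat.gcd_assoc, Nat.gcd_comm (u 1).natAbs, Nat.gcd_assoc]
    rw [he, hc] at h
    exact h
  · have hi : u 1 ≠ 0 := by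
      rw [← Int.natAbs_pos, hc]; exact hNu
    have h := Vu_le_aux Q u 1 0 2 (fun t => by fin_cases t <;> simp) (by decide) (by decide)
      (by decide) hi
    have he : Nat.gcd (u 0).natAbs (Nat.gcd (u 2).natAbs (u 1).natAbs) = Dg u := by
      unfold Dg
      rw [Nat.gcd_comm (u 2).natAbs]
    rw [he, hc] at h
    exact h
  · have hi : u 2 ≠ 0 := by
      rw [← Int.natAbs_pos, hc]; exact hNu
    have h := Vu_le_aux Q u 2 0 1 (fun t => by fin_cases t <;> simp) (by decide) (by decide)
      (by decide) hi
    have he : Nat.gcd (u 0).natAbs (Nat.gcd (u 1).natAbs (u 2).natAbs) = Dg u := rfl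
    rw [he, hc] at h
    exact h


lemma mem_box_natAbs {Q : ℕ} {v : Fin 3 → ℤ} : v ∈ box Q ↔ ∀ i, (v i).natAbs ≤ Q := by
  rw [mem_box]
  constructor
  · intro h i; have := h i; omega
  · intro h i; have := h i; omega

lemma box_mono {Q Q' : ℕ} (h : Q ≤ Q') : box Q ⊆ box Q' := by
  intro v hv
  rw [mem_box_natAbs] at hv ⊢
  intro i
  exact (hv i).trans h

lemma psi_le (X : ℕ) : ∑ w ∈ (box X).erase 0, (1 : ℝ)/(Nu w) ≤ 26 * (X:ℝ)^2 := by
  have hmaps : ∀ w ∈ (box X).erase 0, Nu w ∈ Finset.Icc 1 X := by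
    intro w hw
    rw [Finset.mem_erase] at hw
    obtain ⟨hw0, hwb⟩ := hw
    rw [mem_box_natAbs] at hwb
    rw [Finset.mem_Icc]
    exact ⟨Nu_pos hw0, max_le (max_le (hwb 0) (hwb 1)) (hwb 2)⟩
  rw [← Finset.sum_fiberwise_of_maps_to hmaps]
  have hinner : ∀ n ∈ Finset.Icc 1 X,
      (∑ w ∈ ((box X).erase 0).filter (fun w => Nu w = n), (1:ℝ)/(Nu w)) ≤ 26 * (n:ℝ) := by
    intro n hn
    rw [Finset.mem_Icc] at hn
    have hsub : ((box X).erase 0).filter (fun w => Nu w = n) ⊆ box n \ box (n-1) := by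
      intro w hw
      rw [Finset.mem_filter, Finset.mem_erase] at hw
      obtain ⟨⟨hw0, _⟩, hwn⟩ := hw
      rw [Finset.mem_sdiff, mem_box_natAbs, mem_box_natAbs]
      constructor
      · intro i
        rw [← hwn]
        exact natAbs_le_Nu w i
      · intro hcon
        have : Nu w ≤ n - 1 :=
          max_le (max_le (hcon 0) (hcon 1)) (hcon 2)
        omega
    have hcardsub : (((box X).erase 0).filter (fun w => Nu w = n)).card
        ≤ (box n \ box (n-1)).card := Finset.card_le_card hsub
    have hcard2 : (box n \ box (n-1)).card = (2*n+1)^3 - (2*(n-1)+1)^3 := by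
      rw [Finset.card_sdiff_of_subset (box_mono (by omega)), card_box, card_box]
    have hdiff : (2*n+1)^3 - (2*(n-1)+1)^3 ≤ 26 * n^2 := by
      obtain ⟨p, rfl⟩ : ∃ p, n = p + 1 := ⟨n-1, by omega⟩
      have h5 : 2*(p+1-1)+1 = 2*p+1 := by omega
      rw [h5]
      have h6 : (2*(p+1)+1)^3 ≤ 26*(p+1)^2 + (2*p+1)^3 := by nlinarith [sq_nonneg p]
      exact tsub_le_iff_right.mpr h6
    have hcard3 : (((box X).erase 0).filter (fun w => Nu w = n)).card ≤ 26 * n^2 :=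
      (hcardsub.trans_eq hcard2).trans hdiff
    calc (∑ w ∈ ((box X).erase 0).filter (fun w => Nu w = n), (1:ℝ)/(Nu w))
        = ∑ w ∈ ((box X).erase 0).filter (fun w => Nu w = n), (1:ℝ)/(n:ℝ) := by
          apply Finset.sum_congr rfl
          intro w hw
          rw [(Finset.mem_filter.mp hw).2]
      _ = ((((box X).erase 0).filter (fun w => Nu w = n)).card : ℝ) * ((1:ℝ)/(n:ℝ)) := by
          rw [Finset.sum_const, nsmul_eq_mul]
      _ ≤ (26 * (n:ℝ)^2) * ((1:ℝ)/(n:ℝ)) := by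
          apply mul_le_mul_of_nonneg_right _ (by positivity)
          exact_mod_cast hcard3
      _ = 26 * (n:ℝ) := by
          have hn0 : (n:ℝ) ≠ 0 := by
            have := hn.1
            positivity
          field_simp
  calc (∑ n ∈ Finset.Icc 1 X, ∑ w ∈ ((box X).erase 0).filter (fun w => Nu w = n), (1:ℝ)/(Nu w))
      ≤ ∑ n ∈ Finset.Icc 1 X, 26 * (n:ℝ) := Finset.sum_le_sum hinner
    _ ≤ ∑ _n ∈ Finset.Icc 1 X, 26 * (X:ℝ) := by
        apply Finset.sum_le_sum
        intro n hn
        have h1 := (Finset.mem_Icc.mp hn).2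
        have h2 : (n:ℝ) ≤ X := by exact_mod_cast h1
        linarith
    _ = ((Finset.Icc 1 X).card : ℝ) * (26 * (X:ℝ)) := by rw [Finset.sum_const, nsmul_eq_mul]
    _ ≤ (X:ℝ) * (26 * X) := by
        apply mul_le_mul_of_nonneg_right _ (by positivity)
        rw [Nat.card_Icc]
        have h3 : X + 1 - 1 = X := by omega
        rw [h3]
    _ = 26 * (X:ℝ)^2 := by ring

lemma sum_inv_sq_le (Q : ℕ) : ∑ d ∈ Finset.Icc 1 Q, (1:ℝ)/(d:ℝ)^2 ≤ 2 := by
  have key : ∀ n : ℕ, 1 ≤ n → ∑ d ∈ Finset.Icc 1 n, (1:ℝ)/(d:ℝ)^2 ≤ 2 - 1/n := by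
    intro n hn
    induction n, hn using Nat.le_induction with
    | base => norm_num
    | succ n hn ih =>
      have hstep : Finset.Icc 1 (n+1) = insert (n+1) (Finset.Icc 1 n) := by
        rw [← Finset.insert_Icc_right_eq_Icc_add_one (by omega)]
      rw [hstep, Finset.sum_insert (by rw [Finset.mem_Icc]; omega)]
      have hn0 : (0:ℝ) < n := by exact_mod_cast hn
      have h1 : (1:ℝ)/((n:ℝ)+1)^2 ≤ 1/n - 1/((n:ℝ)+1) := by
        rw [div_sub_div _ _ (ne_of_gt hn0) (by positivity)]
        rw [div_le_div_iff₀ (by positivity) (by positivity)]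
        ring_nf
        nlinarith [hn0]
      push_cast
      push_cast at ih
      linarith
  rcases Nat.eq_zero_or_pos Q with h | h
  · subst h; simp
  · have h1 := key Q h
    have h2 : (0:ℝ) < 1/(Q:ℝ) := by positivity
    linarith

lemma nat_mul_max (a b c : ℕ) : a * max b c = max (a*b) (a*c) := by
  rcases le_total b c with h | h
  · rw [max_eq_right h, max_eq_right (Nat.mul_le_mul_left a h)]
  · rw [max_eq_left h, max_eq_left (Nat.mul_le_mul_left a h)]

set_option maxHeartbeats 1000000 in
lemma sum_D_div_Nu (Q : ℕ) :
    ∑ u ∈ (box Q).erase 0, ((Dg u : ℝ))/(Nu u) ≤ 52 * (Q:ℝ)^2 := by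
  have hmaps : ∀ u ∈ (box Q).erase 0, Dg u ∈ Finset.Icc 1 Q := by
    intro u hu
    rw [Finset.mem_erase] at hu
    obtain ⟨hu0, hub⟩ := hu
    rw [mem_box_natAbs] at hub
    rw [Finset.mem_Icc]
    refine ⟨Dg_pos hu0, ?_⟩
    have hex : ∃ i, u i ≠ 0 := by
      by_contra hcon
      push_neg at hcon
      exact hu0 (funext fun t => hcon t)
    obtain ⟨i, hi⟩ := hex
    exact le_trans (Nat.le_of_dvd (Int.natAbs_pos.mpr hi) (Dg_dvd u i)) (hub i)
  rw [← Finset.sum_fiberwise_of_maps_to hmaps]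
  have hinner : ∀ d ∈ Finset.Icc 1 Q,
      (∑ u ∈ ((box Q).erase 0).filter (fun u => Dg u = d), ((Dg u : ℝ))/(Nu u))
        ≤ 26 * (((Q/d : ℕ)):ℝ)^2 := by
    intro d hd
    rw [Finset.mem_Icc] at hd
    have hd1 : 1 ≤ d := hd.1
    set F := ((box Q).erase 0).filter (fun u => Dg u = d) with hF
    set f : (Fin 3 → ℤ) → (Fin 3 → ℤ) := (fun u t => u t / d) with hfdef
    have hrec : ∀ u ∈ F, ∀ t, u t = d * (f u t) := by
      intro u hu t
      rw [hF, Finset.mem_filter] at hu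
      have hdvd : (d:ℤ) ∣ u t := by
        rw [← hu.2]
        exact Int.natCast_dvd.mpr (Dg_dvd u t)
      rw [hfdef]
      exact (Int.mul_ediv_cancel' hdvd).symm
    have hf0 : ∀ u ∈ F, f u ≠ 0 := by
      intro u hu hcon
      have hu' := hu
      rw [hF, Finset.mem_filter, Finset.mem_erase] at hu'
      apply hu'.1.1
      funext t
      have h1 := hrec u hu t
      rw [hcon] at h1
      simpa using h1
    have habs : ∀ u ∈ F, ∀ t, (u t).natAbs = d * (f u t).natAbs := by
      intro u hu t
      conv_lhs => rw [hrec u hu t]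
      rw [Int.natAbs_mul, Int.natAbs_natCast]
    have hNueq : ∀ u ∈ F, Nu u = d * Nu (f u) := by
      intro u hu
      unfold Nu
      rw [habs u hu 0, habs u hu 1, habs u hu 2, ← nat_mul_max, ← nat_mul_max]
    have hmem : ∀ u ∈ F, f u ∈ (box (Q/d)).erase 0 := by
      intro u hu
      rw [Finset.mem_erase]
      refine ⟨hf0 u hu, ?_⟩
      rw [mem_box_natAbs]
      intro t
      have h1 := habs u hu t
      have hu' := hu
      rw [hF, Finset.mem_filter, Finset.mem_erase, mem_box_natAbs] at hu'
      have h2 : (u t).natAbs ≤ Q := hu'.1.2 t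
      rw [Nat.le_div_iff_mul_le (by omega : 0 < d)]
      calc (f u t).natAbs * d = d * (f u t).natAbs := Nat.mul_comm _ _
        _ = (u t).natAbs := h1.symm
        _ ≤ Q := h2
    have hinj2 : ∀ u ∈ F, ∀ u' ∈ F, f u = f u' → u = u' := by
      intro u hu u' hu' heq
      funext t
      rw [hrec u hu t, hrec u' hu' t, heq]
    calc (∑ u ∈ F, ((Dg u : ℝ))/(Nu u)) = ∑ u ∈ F, (1:ℝ)/(Nu (f u)) := by
          apply Finset.sum_congr rfl
          intro u hu
          have hDg : Dg u = d := (Finset.mem_filter.mp hu).2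
          rw [hDg, hNueq u hu]
          have hNufu : 0 < Nu (f u) := Nu_pos (hf0 u hu)
          have hd0 : (d:ℝ) ≠ 0 := by positivity
          have hN0 : ((Nu (f u)):ℝ) ≠ 0 := by positivity
          push_cast
          field_simp
      _ = ∑ w ∈ F.image f, (1:ℝ)/(Nu w) := (Finset.sum_image (f := fun w => (1:ℝ)/(Nu w)) hinj2).symm
      _ ≤ ∑ w ∈ (box (Q/d)).erase 0, (1:ℝ)/(Nu w) := by
          apply Finset.sum_le_sum_of_subset_of_nonneg
          · intro w hw
            rw [Finset.mem_image] at hw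
            obtain ⟨u, hu, rfl⟩ := hw
            exact hmem u hu
          · intro w _ _
            positivity
      _ ≤ 26 * (((Q/d : ℕ)):ℝ)^2 := psi_le _
  calc (∑ d ∈ Finset.Icc 1 Q, ∑ u ∈ ((box Q).erase 0).filter (fun u => Dg u = d),
          ((Dg u : ℝ))/(Nu u))
      ≤ ∑ d ∈ Finset.Icc 1 Q, 26 * (((Q/d : ℕ)):ℝ)^2 := Finset.sum_le_sum hinner
    _ ≤ ∑ d ∈ Finset.Icc 1 Q, 26 * ((Q:ℝ)/(d:ℝ))^2 := by
        apply Finset.sum_le_sum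
        intro d _
        have h1 : (((Q/d : ℕ)):ℝ) ≤ (Q:ℝ)/(d:ℝ) := Nat.cast_div_le
        have h0 : (0:ℝ) ≤ (((Q/d : ℕ)):ℝ) := by positivity
        nlinarith [h1, h0]
    _ = 26 * (Q:ℝ)^2 * ∑ d ∈ Finset.Icc 1 Q, 1/(d:ℝ)^2 := by
        rw [Finset.mul_sum]
        apply Finset.sum_congr rfl
        intro d hd
        have hd1 := (Finset.mem_Icc.mp hd).1
        have hd0 : (d:ℝ) ≠ 0 := by positivity
        field_simp
        try ring
    _ ≤ 26 * (Q:ℝ)^2 * 2 := by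
        apply mul_le_mul_of_nonneg_left (sum_inv_sq_le Q) (by positivity)
    _ = 52 * (Q:ℝ)^2 := by ring

set_option maxHeartbeats 1000000 in
lemma orth_pairs (Q : ℕ) (hQ : 1 ≤ Q) :
    (((box Q ×ˢ box Q).filter fun p => p.1 ⬝ᵥ p.2 = 0).card : ℝ) ≤ 370 * (Q:ℝ)^4 := by
  set P := (box Q ×ˢ box Q).filter (fun p => p.1 ⬝ᵥ p.2 = 0) with hP
  have hmaps : ∀ p ∈ P, p.1 ∈ box Q := by
    intro p hp
    rw [hP, Finset.mem_filter, Finset.mem_product] at hp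
    exact hp.1.1
  have hcard : P.card = ∑ u ∈ box Q, (P.filter (fun p => p.1 = u)).card :=
    Finset.card_eq_sum_card_fiberwise hmaps
  have hV : ∀ u, (P.filter (fun p => p.1 = u)).card
      ≤ ((box Q).filter (fun v => u ⬝ᵥ v = 0)).card := by
    intro u
    apply Finset.card_le_card_of_injOn (fun p => p.2)
    · intro p hp
      rw [Finset.mem_coe, Finset.mem_filter] at hp
      obtain ⟨hp1, hp2⟩ := hp
      rw [hP, Finset.mem_filter, Finset.mem_product] at hp1
      rw [Finset.mem_coe, Finset.mem_filter]
      exact ⟨hp1.1.2, by rw [← hp2]; exact hp1.2⟩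
    · intro p hp p' hp' hpp
      simp only [Finset.coe_filter, Set.mem_setOf_eq] at hp hp'
      exact Prod.ext (by rw [hp.2, hp'.2]) hpp
  have h0box : (0 : Fin 3 → ℤ) ∈ box Q := by
    rw [mem_box_natAbs]
    intro i
    simp
  have hbox0 : ((box Q).filter (fun v => (0 : Fin 3 → ℤ) ⬝ᵥ v = 0)).card ≤ (2*Q+1)^3 := by
    calc ((box Q).filter (fun v => (0 : Fin 3 → ℤ) ⬝ᵥ v = 0)).card ≤ (box Q).card :=
          Finset.card_filter_le _ _
      _ = (2*Q+1)^3 := card_box Q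
  have he3 : (((2*Q+1)^3 : ℕ) : ℝ) = (2*(Q:ℝ)+1)^3 := by push_cast; ring
  have hreal : (P.card : ℝ) ≤ (2*(Q:ℝ)+1)^3
      + ∑ u ∈ (box Q).erase 0, (4*(Q:ℝ)^2*(Dg u)/(Nu u) + (4*(Q:ℝ) + 1)) := by
    rw [hcard, ← Finset.add_sum_erase _ _ h0box]
    push_cast
    apply add_le_add
    · calc ((P.filter (fun p => p.1 = 0)).card : ℝ)
          ≤ (((box Q).filter (fun v => (0 : Fin 3 → ℤ) ⬝ᵥ v = 0)).card : ℝ) := by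
            exact_mod_cast hV 0
        _ ≤ (2*(Q:ℝ)+1)^3 := by
            rw [← he3]
            exact_mod_cast hbox0
    · apply Finset.sum_le_sum
      intro u hu
      rw [Finset.mem_erase] at hu
      calc ((P.filter (fun p => p.1 = u)).card : ℝ)
          ≤ (((box Q).filter (fun v => u ⬝ᵥ v = 0)).card : ℝ) := by exact_mod_cast hV u
        _ ≤ 4*(Q:ℝ)^2*(Dg u)/(Nu u) + 4*(Q:ℝ) + 1 := Vu_le Q u hu.1
        _ = 4*(Q:ℝ)^2*(Dg u)/(Nu u) + (4*(Q:ℝ) + 1) := by ring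
  have hsum2 : ∑ u ∈ (box Q).erase 0, (4*(Q:ℝ)^2*(Dg u)/(Nu u) + (4*(Q:ℝ) + 1))
      = 4*(Q:ℝ)^2 * (∑ u ∈ (box Q).erase 0, ((Dg u:ℝ))/(Nu u))
        + (((box Q).erase 0).card : ℝ) * (4*(Q:ℝ) + 1) := by
    rw [Finset.sum_add_distrib, Finset.sum_const, nsmul_eq_mul, Finset.mul_sum]
    congr 1
    apply Finset.sum_congr rfl
    intro u _
    ring
  have hS := sum_D_div_Nu Q
  have hQR : (1:ℝ) ≤ (Q:ℝ) := by exact_mod_cast hQ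
  have h3Q : 2*(Q:ℝ)+1 ≤ 3*(Q:ℝ) := by linarith
  have hA1 : (2*(Q:ℝ)+1)^3 ≤ 27*(Q:ℝ)^3 := by
    have h1 : (2*(Q:ℝ)+1)^3 ≤ (3*(Q:ℝ))^3 := pow_le_pow_left₀ (by positivity) h3Q 3
    nlinarith [h1]
  have hcarderase : (((box Q).erase 0).card : ℝ) ≤ (2*(Q:ℝ)+1)^3 := by
    have h1 : ((box Q).erase 0).card ≤ (2*Q+1)^3 :=
      le_trans Finset.card_erase_le (le_of_eq (card_box Q))
    rw [← he3]
    exact_mod_cast h1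
  have hsumbound : 4*(Q:ℝ)^2 * (∑ u ∈ (box Q).erase 0, ((Dg u:ℝ))/(Nu u)) ≤ 208*(Q:ℝ)^4 := by
    calc 4*(Q:ℝ)^2 * (∑ u ∈ (box Q).erase 0, ((Dg u:ℝ))/(Nu u))
        ≤ 4*(Q:ℝ)^2 * (52 * (Q:ℝ)^2) := by
          apply mul_le_mul_of_nonneg_left hS (by positivity)
      _ = 208*(Q:ℝ)^4 := by ring
  have hQ34 : (Q:ℝ)^3 ≤ (Q:ℝ)^4 := by
    nlinarith [hQR, pow_nonneg (show (0:ℝ) ≤ (Q:ℝ) by linarith) 3]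
  calc (P.card : ℝ)
      ≤ (2*(Q:ℝ)+1)^3 + ∑ u ∈ (box Q).erase 0, (4*(Q:ℝ)^2*(Dg u)/(Nu u) + (4*(Q:ℝ)+1)) := hreal
    _ = (2*(Q:ℝ)+1)^3 + (4*(Q:ℝ)^2 * (∑ u ∈ (box Q).erase 0, ((Dg u:ℝ))/(Nu u))
          + (((box Q).erase 0).card : ℝ) * (4*(Q:ℝ) + 1)) := by rw [hsum2]
    _ ≤ 27*(Q:ℝ)^3 + (208*(Q:ℝ)^4 + 27*(Q:ℝ)^3 * (5*(Q:ℝ))) := by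
        have hcb : (((box Q).erase 0).card : ℝ) * (4*(Q:ℝ) + 1) ≤ 27*(Q:ℝ)^3 * (5*(Q:ℝ)) := by
          apply mul_le_mul (hcarderase.trans hA1) (by linarith) (by positivity) (by positivity)
        linarith [hA1, hsumbound, hcb]
    _ ≤ 370 * (Q:ℝ)^4 := by nlinarith [hQ34]


lemma mem_sph_box {r Q : ℕ} (hr : r ≤ Q^2) {x : Fin 3 → ℤ} (hx : x ∈ sph r) : x ∈ box Q := by
  have hdot := mem_sph.mp hx
  rw [mem_box_natAbs]
  intro i
  have h2 : x i * x i ≤ (r:ℤ) := by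
    rw [dot_eq] at hdot
    have h3 : x 0 * x 0 ≤ (r:ℤ) ∧ x 1 * x 1 ≤ (r:ℤ) ∧ x 2 * x 2 ≤ (r:ℤ) := by
      refine ⟨by nlinarith [mul_self_nonneg (x 1), mul_self_nonneg (x 2)],
        by nlinarith [mul_self_nonneg (x 0), mul_self_nonneg (x 2)],
        by nlinarith [mul_self_nonneg (x 0), mul_self_nonneg (x 1)]⟩
    fin_cases i
    · exact h3.1
    · exact h3.2.1
    · exact h3.2.2
  have h4 : ((x i).natAbs : ℤ) * ((x i).natAbs : ℤ) ≤ ((Q:ℤ)) * ((Q:ℤ)) := by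
    have h5 : ((x i).natAbs : ℤ) * ((x i).natAbs : ℤ) = x i * x i := by
      exact_mod_cast Int.natAbs_mul_self (a := x i)
    calc ((x i).natAbs : ℤ) * ((x i).natAbs : ℤ) = x i * x i := h5
      _ ≤ (r:ℤ) := h2
      _ ≤ ((Q^2 : ℕ) : ℤ) := by exact_mod_cast hr
      _ = (Q:ℤ) * (Q:ℤ) := by push_cast; ring
  by_contra hcon
  push_neg at hcon
  have h5 : (Q:ℤ) < ((x i).natAbs : ℤ) := by exact_mod_cast hcon
  nlinarith [h4, h5, Int.natCast_nonneg Q]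

/-- Second moment bound. -/
lemma second_moment (q : ℕ) (hq : 1 ≤ q) :
    (∑ r ∈ Finset.Icc 1 (q^2), ((latticePointsOnSphere r : ℝ))^2) ≤ 5920 * (q:ℝ)^4 := by
  have hdisj : ∀ r ∈ Finset.Icc 1 (q^2), ∀ r' ∈ Finset.Icc 1 (q^2), r ≠ r' →
      Disjoint (sph r ×ˢ sph r) (sph r' ×ˢ sph r') := by
    intro r _ r' _ hrr'
    rw [Finset.disjoint_left]
    intro p hp hp'
    rw [Finset.mem_product] at hp hp'
    have h1 := mem_sph.mp hp.1
    have h2 := mem_sph.mp hp'.1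
    apply hrr'
    have h3 : (r:ℤ) = (r':ℤ) := by rw [← h1, ← h2]
    exact_mod_cast h3
  have hsum : ∑ r ∈ Finset.Icc 1 (q^2), (sph r ×ˢ sph r).card
      = ((Finset.Icc 1 (q^2)).biUnion (fun r => sph r ×ˢ sph r)).card :=
    (Finset.card_biUnion hdisj).symm
  have hsub : (Finset.Icc 1 (q^2)).biUnion (fun r => sph r ×ˢ sph r)
      ⊆ (box q ×ˢ box q).filter (fun p => p.1 ⬝ᵥ p.1 = p.2 ⬝ᵥ p.2) := by
    intro p hp
    rw [Finset.mem_biUnion] at hp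
    obtain ⟨r, hr, hpr⟩ := hp
    rw [Finset.mem_product] at hpr
    rw [Finset.mem_filter, Finset.mem_product]
    have hrb := (Finset.mem_Icc.mp hr).2
    refine ⟨⟨mem_sph_box hrb hpr.1, mem_sph_box hrb hpr.2⟩, ?_⟩
    rw [mem_sph.mp hpr.1, mem_sph.mp hpr.2]
  have hop : ((box q ×ˢ box q).filter (fun p => p.1 ⬝ᵥ p.1 = p.2 ⬝ᵥ p.2)).card
      ≤ ((box (2*q) ×ˢ box (2*q)).filter (fun p => p.1 ⬝ᵥ p.2 = 0)).card := by
    apply Finset.card_le_card_of_injOn (fun p => (p.1 - p.2, p.1 + p.2))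
    · intro p hp
      rw [Finset.mem_coe, Finset.mem_filter, Finset.mem_product] at hp
      obtain ⟨⟨hp1, hp2⟩, hpd⟩ := hp
      rw [mem_box_natAbs] at hp1 hp2
      rw [Finset.mem_coe, Finset.mem_filter, Finset.mem_product, mem_box_natAbs, mem_box_natAbs]
      refine ⟨⟨?_, ?_⟩, ?_⟩
      · intro i
        have g1 := hp1 i; have g2 := hp2 i
        simp only [Pi.sub_apply]
        omega
      · intro i
        have g1 := hp1 i; have g2 := hp2 i
        simp only [Pi.add_apply]
        omega
      · simp only [dot_eq, Pi.sub_apply, Pi.add_apply] at hpd ⊢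
        linear_combination hpd
    · intro p hp p' hp' hpe
      have h1 : p.1 - p.2 = p'.1 - p'.2 := congrArg Prod.fst hpe
      have h2 : p.1 + p.2 = p'.1 + p'.2 := congrArg Prod.snd hpe
      have hx : p.1 = p'.1 := by
        funext t
        have e1 : p.1 t - p.2 t = p'.1 t - p'.2 t := congrFun h1 t
        have e2 : p.1 t + p.2 t = p'.1 t + p'.2 t := congrFun h2 t
        omega
      have hy : p.2 = p'.2 := by
        funext t
        have e1 : p.1 t - p.2 t = p'.1 t - p'.2 t := congrFun h1 t
        have e2 : p.1 t + p.2 t = p'.1 t + p'.2 t := congrFun h2 t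
        omega
      exact Prod.ext hx hy
  have horth := orth_pairs (2*q) (by omega)
  have hchain : (∑ r ∈ Finset.Icc 1 (q^2), ((sph r ×ˢ sph r).card : ℝ)) ≤ 5920 * (q:ℝ)^4 := by
    have h1 : ∑ r ∈ Finset.Icc 1 (q^2), ((sph r ×ˢ sph r).card : ℝ)
        = ((∑ r ∈ Finset.Icc 1 (q^2), (sph r ×ˢ sph r).card : ℕ) : ℝ) := by
      push_cast
      rfl
    rw [h1, hsum]
    calc ((((Finset.Icc 1 (q^2)).biUnion (fun r => sph r ×ˢ sph r)).card : ℕ) : ℝ)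
        ≤ ((((box q ×ˢ box q).filter (fun p => p.1 ⬝ᵥ p.1 = p.2 ⬝ᵥ p.2)).card : ℕ) : ℝ) := by
          exact_mod_cast Finset.card_le_card hsub
      _ ≤ ((((box (2*q) ×ˢ box (2*q)).filter (fun p => p.1 ⬝ᵥ p.2 = 0)).card : ℕ) : ℝ) := by
          exact_mod_cast hop
      _ ≤ 370 * ((2*q : ℕ):ℝ)^4 := horth
      _ = 5920 * (q:ℝ)^4 := by push_cast; ring
  calc (∑ r ∈ Finset.Icc 1 (q^2), ((latticePointsOnSphere r : ℝ))^2)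
      = ∑ r ∈ Finset.Icc 1 (q^2), ((sph r ×ˢ sph r).card : ℝ) := by
        apply Finset.sum_congr rfl
        intro r _
        rw [M_eq, Finset.card_product]
        push_cast
        ring
    _ ≤ 5920 * (q:ℝ)^4 := hchain

/-- First moment bound. -/
lemma first_moment (q : ℕ) (hq : 2 ≤ q) :
    (q^3 : ℕ) ≤ 1 + ∑ r ∈ Finset.Icc 1 (q^2), latticePointsOnSphere r := by
  set m : ℕ := q / 2 with hm
  have hbox : (box m).card = (2*m+1)^3 := card_box m
  have hq3 : q^3 ≤ (2*m+1)^3 := by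
    have h1 : q ≤ 2*m+1 := by omega
    exact Nat.pow_le_pow_left h1 3
  have hmaps : ∀ x ∈ (box m).erase 0, (x ⬝ᵥ x).toNat ∈ Finset.Icc 1 (q^2) := by
    intro x hx
    rw [Finset.mem_erase, mem_box_natAbs] at hx
    obtain ⟨hx0, hxb⟩ := hx
    have hex : ∃ i, x i ≠ 0 := by
      by_contra hcon
      push_neg at hcon
      exact hx0 (funext fun t => hcon t)
    rw [Finset.mem_Icc]
    rw [dot_eq]
    have hsq : ∀ i : Fin 3, x i * x i ≤ ((m:ℤ))*((m:ℤ)) := by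
      intro i
      have h1 := hxb i
      have h2 : ((x i).natAbs : ℤ) ≤ (m:ℤ) := by exact_mod_cast h1
      have h3 : ((x i).natAbs : ℤ) * ((x i).natAbs : ℤ) = x i * x i := by
        exact_mod_cast Int.natAbs_mul_self (a := x i)
      nlinarith [h2, h3, Int.natCast_nonneg (x i).natAbs]
    constructor
    · obtain ⟨i, hi⟩ := hex
      have h1 : (1:ℤ) ≤ x i * x i := by
        rcases lt_or_gt_of_ne hi with h | h <;> nlinarith
      have h1' : (1:ℤ) ≤ x 0 * x 0 ∨ (1:ℤ) ≤ x 1 * x 1 ∨ (1:ℤ) ≤ x 2 * x 2 := by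
        fin_cases i
        · exact Or.inl h1
        · exact Or.inr (Or.inl h1)
        · exact Or.inr (Or.inr h1)
      have h2 : (1:ℤ) ≤ x 0 * x 0 + x 1 * x 1 + x 2 * x 2 := by
        have g0 := mul_self_nonneg (x 0)
        have g1 := mul_self_nonneg (x 1)
        have g2 := mul_self_nonneg (x 2)
        rcases h1' with h | h | h <;> linarith
      omega
    · have h3 : x 0 * x 0 + x 1 * x 1 + x 2 * x 2 ≤ 3*((m:ℤ))*((m:ℤ)) := by
        have g0 := hsq 0; have g1 := hsq 1; have g2 := hsq 2
        linarith
      have h4 : 3*((m:ℤ))*((m:ℤ)) ≤ ((q:ℤ))*((q:ℤ)) := by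
        have h5 : 2*m ≤ q := by omega
        have h6 : (2*(m:ℤ)) ≤ (q:ℤ) := by exact_mod_cast h5
        have h7 : (0:ℤ) ≤ m := Int.natCast_nonneg _
        nlinarith
      have h8 : ((q:ℤ))*((q:ℤ)) = ((q^2 : ℕ) : ℤ) := by push_cast; ring
      omega
  have hcard2 : ((box m).erase 0).card
      = ∑ r ∈ Finset.Icc 1 (q^2), (((box m).erase 0).filter (fun x => (x ⬝ᵥ x).toNat = r)).card :=
    Finset.card_eq_sum_card_fiberwise hmaps
  have hfib : ∀ r ∈ Finset.Icc 1 (q^2),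
      (((box m).erase 0).filter (fun x => (x ⬝ᵥ x).toNat = r)).card ≤ latticePointsOnSphere r := by
    intro r hr
    rw [M_eq]
    apply Finset.card_le_card
    intro x hx
    rw [Finset.mem_filter] at hx
    rw [mem_sph]
    have h1 : 0 ≤ x ⬝ᵥ x := by
      rw [dot_eq]
      nlinarith [mul_self_nonneg (x 0), mul_self_nonneg (x 1), mul_self_nonneg (x 2)]
    omega
  calc q^3 ≤ (2*m+1)^3 := hq3
    _ = (box m).card := hbox.symm
    _ ≤ 1 + ((box m).erase 0).card := by
        have h0 : (0 : Fin 3 → ℤ) ∈ box m := by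
          rw [mem_box_natAbs]; intro i; simp
        have h9 := Finset.card_erase_add_one h0
        omega
    _ ≤ 1 + ∑ r ∈ Finset.Icc 1 (q^2), latticePointsOnSphere r := by
        rw [hcard2]
        exact Nat.add_le_add_left (Finset.sum_le_sum hfib) 1

end ManyRich

/-- For every `ε > 0` there is `c > 0` such that for every integer `q > 1`, the number
of integers `1 ≤ r ≤ q²` with `M_r ≥ q/2` is at least `c · q^(2-ε)`. -/
theorem many_rich_radii :
    ∀ ε : ℝ, 0 < ε → ∃ c : ℝ, 0 < c ∧ ∀ q : ℕ, 1 < q →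
      c * (q : ℝ) ^ ((2 : ℝ) - ε) ≤
        (Set.ncard {r : ℕ | 1 ≤ r ∧ r ≤ q ^ 2 ∧
          (q : ℝ) / 2 ≤ (latticePointsOnSphere r : ℝ)} : ℝ) := by
  classical
  intro ε hε
  refine ⟨1/94720, by norm_num, ?_⟩
  intro q hq
  set M : ℕ → ℝ := fun r => ((latticePointsOnSphere r : ℝ)) with hM
  set Rich := (Finset.Icc 1 (q^2)).filter (fun r => (q:ℝ)/2 ≤ M r) with hRich
  have hseteq : {r : ℕ | 1 ≤ r ∧ r ≤ q ^ 2 ∧ (q : ℝ) / 2 ≤ ((latticePointsOnSphere r : ℕ) : ℝ)}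
      = ↑Rich := by
    ext r
    simp only [Set.mem_setOf_eq, hRich, Finset.coe_filter, Finset.mem_Icc, hM]
    tauto
  rw [hseteq, Set.ncard_coe_finset]
  have hq2 : 2 ≤ q := hq
  have hq1 : 1 ≤ q := by omega
  have hqR : (2:ℝ) ≤ (q:ℝ) := by exact_mod_cast hq2
  have hq0 : (0:ℝ) < q := by linarith
  have h1 : ((q:ℝ))^3 - 1 ≤ ∑ r ∈ Finset.Icc 1 (q^2), M r := by
    have h0 := ManyRich.first_moment q hq2
    have h2 : ((q^3 : ℕ) : ℝ)
        ≤ ((1 + ∑ r ∈ Finset.Icc 1 (q^2), latticePointsOnSphere r : ℕ) : ℝ) := by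
      exact_mod_cast h0
    push_cast at h2
    simp only [hM]
    linarith
  have hsplit : ∑ r ∈ Finset.Icc 1 (q^2), M r
      = ∑ r ∈ Rich, M r
        + ∑ r ∈ (Finset.Icc 1 (q^2)).filter (fun r => ¬ ((q:ℝ)/2 ≤ M r)), M r := by
    rw [hRich]
    exact (Finset.sum_filter_add_sum_filter_not _ _ _).symm
  have hpoor : ∑ r ∈ (Finset.Icc 1 (q^2)).filter (fun r => ¬ ((q:ℝ)/2 ≤ M r)), M r
      ≤ (q:ℝ)^2 * ((q:ℝ)/2) := by
    calc ∑ r ∈ (Finset.Icc 1 (q^2)).filter (fun r => ¬ ((q:ℝ)/2 ≤ M r)), M r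
        ≤ ∑ _r ∈ (Finset.Icc 1 (q^2)).filter (fun r => ¬ ((q:ℝ)/2 ≤ M r)), ((q:ℝ)/2) := by
          apply Finset.sum_le_sum
          intro r hr
          have h5 := (Finset.mem_filter.mp hr).2
          linarith [not_le.mp h5]
      _ = (((Finset.Icc 1 (q^2)).filter (fun r => ¬ ((q:ℝ)/2 ≤ M r))).card : ℝ) * ((q:ℝ)/2) := by
          rw [Finset.sum_const, nsmul_eq_mul]
      _ ≤ (q:ℝ)^2 * ((q:ℝ)/2) := by
          apply mul_le_mul_of_nonneg_right _ (by positivity)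
          have hc1 : ((Finset.Icc 1 (q^2)).filter (fun r => ¬ ((q:ℝ)/2 ≤ M r))).card
              ≤ (Finset.Icc 1 (q^2)).card := Finset.card_filter_le _ _
          have hc2 : (Finset.Icc 1 (q^2)).card = q^2 := by
            rw [Nat.card_Icc]; omega
          calc (((Finset.Icc 1 (q^2)).filter (fun r => ¬ ((q:ℝ)/2 ≤ M r))).card : ℝ)
              ≤ ((Finset.Icc 1 (q^2)).card : ℝ) := by exact_mod_cast hc1
            _ = ((q:ℝ))^2 := by rw [hc2]; push_cast; ring
  have hrichsum : (q:ℝ)^3/4 ≤ ∑ r ∈ Rich, M r := by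
    have hq3 : (8:ℝ) ≤ (q:ℝ)^3 := by nlinarith [hqR]
    nlinarith [h1, hsplit, hpoor]
  have hCS := sq_sum_le_card_mul_sum_sq (s := Rich) (f := M)
  have hsq2 : ∑ r ∈ Rich, (M r)^2 ≤ 5920 * (q:ℝ)^4 := by
    calc ∑ r ∈ Rich, (M r)^2 ≤ ∑ r ∈ Finset.Icc 1 (q^2), (M r)^2 := by
          apply Finset.sum_le_sum_of_subset_of_nonneg (Finset.filter_subset _ _)
          intro r _ _
          positivity
      _ ≤ 5920 * (q:ℝ)^4 := ManyRich.second_moment q hq1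
  have hpos : (0:ℝ) ≤ (Rich.card : ℝ) := Nat.cast_nonneg _
  have hfinal : (q:ℝ)^2/94720 ≤ (Rich.card : ℝ) := by
    have h6 : ((q:ℝ)^3/4)^2 ≤ (Rich.card : ℝ) * (5920 * (q:ℝ)^4) := by
      calc ((q:ℝ)^3/4)^2 ≤ (∑ r ∈ Rich, M r)^2 :=
            pow_le_pow_left₀ (by positivity) hrichsum 2
        _ ≤ (Rich.card : ℝ) * ∑ r ∈ Rich, (M r)^2 := hCS
        _ ≤ (Rich.card : ℝ) * (5920 * (q:ℝ)^4) := by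
            apply mul_le_mul_of_nonneg_left hsq2 hpos
    have h8 : (q:ℝ)^2/94720 * (5920*(q:ℝ)^4) ≤ (Rich.card : ℝ) * (5920 * (q:ℝ)^4) := by
      calc (q:ℝ)^2/94720 * (5920*(q:ℝ)^4) = ((q:ℝ)^3/4)^2 := by ring
        _ ≤ _ := h6
    exact le_of_mul_le_mul_right h8 (by positivity : (0:ℝ) < 5920*(q:ℝ)^4)
  have hr1 : (q:ℝ) ^ ((2:ℝ) - ε) ≤ (q:ℝ)^(2:ℝ) :=
    Real.rpow_le_rpow_of_exponent_le (by linarith) (by linarith)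
  have hr2 : (q:ℝ)^(2:ℝ) = (q:ℝ)^(2:ℕ) := by
    rw [show ((2:ℝ)) = ((2:ℕ):ℝ) by norm_num, Real.rpow_natCast]
  calc (1/94720) * (q:ℝ) ^ ((2:ℝ) - ε) ≤ (1/94720) * (q:ℝ)^(2:ℕ) := by
        apply mul_le_mul_of_nonneg_left _ (by norm_num)
        rw [← hr2]
        exact hr1
    _ = (q:ℝ)^2/94720 := by ring
    _ ≤ (Rich.card : ℝ) := hfinal
end

section
/- For every ε > 0 and every κ > 0, the following holds for every integer q > 1: if A is a set of integers contained in {1, 2, …, q²} with #A ≥ κ · q^{2−ε}, then Σ_{(r₁,r₂,r₃) ∈ A³} 1/gcd(r₁,r₂) ≥ (κ⁶/4) · q^{6−6ε}. -/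
open Finset

/-- Tail bound for sum of 1/d². -/
lemma sum_inv_sq_tail (m : ℕ) (hm : 2 ≤ m) :
    ∀ n : ℕ, ∑ d ∈ Finset.Icc m n, (1 : ℝ) / (d : ℝ) ^ 2 ≤ 1 / ((m : ℝ) - 1) := by
  have hm1 : (1 : ℝ) ≤ (m : ℝ) - 1 := by
    have : (2 : ℝ) ≤ (m : ℝ) := by exact_mod_cast hm
    linarith
  have key : ∀ n : ℕ, m - 1 ≤ n →
      ∑ d ∈ Finset.Icc m n, (1 : ℝ) / (d : ℝ) ^ 2 ≤ 1 / ((m : ℝ) - 1) - 1 / (n : ℝ) := by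
    intro n hn
    induction n, hn using Nat.le_induction with
    | base =>
        have h1 : Finset.Icc m (m - 1) = ∅ := by
          apply Finset.Icc_eq_empty
          omega
        have h2 : ((m - 1 : ℕ) : ℝ) = (m : ℝ) - 1 := by
          have : 1 ≤ m := by omega
          push_cast [this]; ring
        rw [h1, h2]
        simp
    | succ n hn ih =>
        have hmn : m ≤ n + 1 := by omega
        rw [Finset.sum_Icc_succ_top hmn]
        have hnpos : (0 : ℝ) < (n : ℝ) := by
          have : 1 ≤ n := by omega
          exact_mod_cast this
        have hn1pos : (0 : ℝ) < ((n : ℝ) + 1) := by linarith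
        have hstep : (1 : ℝ) / ((n : ℝ) + 1) ^ 2 ≤ 1 / (n : ℝ) - 1 / ((n : ℝ) + 1) := by
          rw [div_sub_div _ _ (ne_of_gt hnpos) (ne_of_gt hn1pos)]
          rw [div_le_div_iff₀ (by positivity) (by positivity)]
          ring_nf
          nlinarith
        push_cast
        linarith
  intro n
  rcases le_or_gt m n with h | h
  · have := key n (by omega)
    have hnpos : (0 : ℝ) < (n : ℝ) := by
      have : 1 ≤ n := by omega
      exact_mod_cast this
    have : (0:ℝ) < 1 / (n:ℝ) := by positivity
    linarith [key n (by omega)]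
  · rw [Finset.Icc_eq_empty (by omega)]
    rw [Finset.sum_empty]
    exact div_nonneg zero_le_one (by linarith)

/-- Counting lemma: pairs in A×A with large gcd are few. -/
lemma bad_card_le (n : ℕ) (A : Finset ℕ) (hA : A ⊆ Finset.Icc 1 n)
    (t : ℝ) (ht : 1 < t) :
    ((((A ×ˢ A).filter (fun p => t < (Nat.gcd p.1 p.2 : ℝ))).card : ℝ)) ≤ (n : ℝ) ^ 2 / (t - 1) := by
  classical
  set m : ℕ := ⌊t⌋₊ + 1 with hmdef
  have hfl1 : 1 ≤ ⌊t⌋₊ := by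
    have : (1 : ℝ) ≤ t := ht.le
    exact Nat.le_floor (by exact_mod_cast this)
  have hm2 : 2 ≤ m := by omega
  have hmem : ∀ p : ℕ × ℕ, p ∈ A ×ˢ A → 1 ≤ p.1 ∧ p.1 ≤ n := by
    intro p hp
    have h1 := hA (Finset.mem_product.mp hp).1
    rwa [Finset.mem_Icc] at h1
  -- subset of biUnion
  have hsub : ((A ×ˢ A).filter (fun p => t < (Nat.gcd p.1 p.2 : ℝ))) ⊆
      (Finset.Icc m n).biUnion (fun d => (A ×ˢ A).filter (fun p => Nat.gcd p.1 p.2 = d)) := by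
    intro p hp
    rw [Finset.mem_filter] at hp
    obtain ⟨hpS, hpt⟩ := hp
    obtain ⟨hp1, hp1n⟩ := hmem p hpS
    rw [Finset.mem_biUnion]
    refine ⟨Nat.gcd p.1 p.2, ?_, ?_⟩
    · rw [Finset.mem_Icc]
      constructor
      · have h1 : (⌊t⌋₊ : ℝ) < (Nat.gcd p.1 p.2 : ℝ) :=
          lt_of_le_of_lt (Nat.floor_le (by linarith : (0:ℝ) ≤ t)) hpt
        have h2 : ⌊t⌋₊ < Nat.gcd p.1 p.2 := by exact_mod_cast h1
        omega
      · exact le_trans (Nat.gcd_le_left p.2 (by omega)) hp1n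
    · rw [Finset.mem_filter]
      exact ⟨hpS, rfl⟩
  -- card of each fiber
  have hfiber : ∀ d : ℕ, ((A ×ˢ A).filter (fun p => Nat.gcd p.1 p.2 = d)).card ≤ (n / d) ^ 2 := by
    intro d
    have hsub2 : (A ×ˢ A).filter (fun p => Nat.gcd p.1 p.2 = d) ⊆
        ((Finset.Ioc 0 n).filter (d ∣ ·)) ×ˢ ((Finset.Ioc 0 n).filter (d ∣ ·)) := by
      intro p hp
      rw [Finset.mem_filter] at hp
      obtain ⟨hpS, hpd⟩ := hp
      have h1 := hA (Finset.mem_product.mp hpS).1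
      have h2 := hA (Finset.mem_product.mp hpS).2
      rw [Finset.mem_Icc] at h1 h2
      rw [Finset.mem_product]
      constructor <;> rw [Finset.mem_filter, Finset.mem_Ioc]
      · exact ⟨⟨by omega, h1.2⟩, hpd ▸ Nat.gcd_dvd_left _ _⟩
      · exact ⟨⟨by omega, h2.2⟩, hpd ▸ Nat.gcd_dvd_right _ _⟩
    calc ((A ×ˢ A).filter (fun p => Nat.gcd p.1 p.2 = d)).card
        ≤ _ := Finset.card_le_card hsub2
      _ = (n / d) ^ 2 := by
          rw [Finset.card_product, Nat.Ioc_filter_dvd_card_eq_div, sq]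
  -- combine in ℕ then ℝ
  have hnat : ((A ×ˢ A).filter (fun p => t < (Nat.gcd p.1 p.2 : ℝ))).card ≤
      ∑ d ∈ Finset.Icc m n, (n / d) ^ 2 := by
    calc _ ≤ _ := Finset.card_le_card hsub
      _ ≤ ∑ d ∈ Finset.Icc m n, ((A ×ˢ A).filter (fun p => Nat.gcd p.1 p.2 = d)).card :=
          Finset.card_biUnion_le
      _ ≤ ∑ d ∈ Finset.Icc m n, (n / d) ^ 2 := Finset.sum_le_sum (fun d _ => hfiber d)
  have hreal : (((A ×ˢ A).filter (fun p => t < (Nat.gcd p.1 p.2 : ℝ))).card : ℝ) ≤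
      ∑ d ∈ Finset.Icc m n, ((n : ℝ) / (d : ℝ)) ^ 2 := by
    calc (((A ×ˢ A).filter (fun p => t < (Nat.gcd p.1 p.2 : ℝ))).card : ℝ)
        ≤ ((∑ d ∈ Finset.Icc m n, (n / d) ^ 2 : ℕ) : ℝ) := by exact_mod_cast hnat
      _ = ∑ d ∈ Finset.Icc m n, (((n / d : ℕ) : ℝ)) ^ 2 := by push_cast; ring
      _ ≤ ∑ d ∈ Finset.Icc m n, ((n : ℝ) / (d : ℝ)) ^ 2 := by
          apply Finset.sum_le_sum
          intro d _
          have h1 : ((n / d : ℕ) : ℝ) ≤ (n : ℝ) / (d : ℝ) := Nat.cast_div_le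
          have h2 : (0:ℝ) ≤ ((n / d : ℕ) : ℝ) := by positivity
          nlinarith
  have hsumsq : ∑ d ∈ Finset.Icc m n, ((n : ℝ) / (d : ℝ)) ^ 2 ≤ (n : ℝ) ^ 2 / ((m : ℝ) - 1) := by
    have h1 : ∑ d ∈ Finset.Icc m n, ((n : ℝ) / (d : ℝ)) ^ 2
        = (n : ℝ) ^ 2 * ∑ d ∈ Finset.Icc m n, (1 : ℝ) / (d : ℝ) ^ 2 := by
      rw [Finset.mul_sum]
      apply Finset.sum_congr rfl
      intro d _
      rw [div_pow]
      ring
    rw [h1]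
    have h2 := sum_inv_sq_tail m hm2 n
    have h3 : (0:ℝ) ≤ (n:ℝ)^2 := by positivity
    calc (n : ℝ) ^ 2 * ∑ d ∈ Finset.Icc m n, (1 : ℝ) / (d : ℝ) ^ 2
        ≤ (n : ℝ) ^ 2 * (1 / ((m : ℝ) - 1)) := by
          exact mul_le_mul_of_nonneg_left h2 h3
      _ = (n : ℝ) ^ 2 / ((m : ℝ) - 1) := by ring
  have hmt : t - 1 ≤ (m : ℝ) - 1 := by
    have : t ≤ (⌊t⌋₊ : ℝ) + 1 := le_of_lt (Nat.lt_floor_add_one t)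
    have hcast : (m : ℝ) = (⌊t⌋₊ : ℝ) + 1 := by push_cast [hmdef]; ring
    linarith
  have hfinal : (n : ℝ) ^ 2 / ((m : ℝ) - 1) ≤ (n : ℝ) ^ 2 / (t - 1) := by
    apply div_le_div_of_nonneg_left (by positivity) (by linarith) hmt
  linarith


/-- The good set: pairs with gcd at most `t`. -/
noncomputable def goodSet (A : Finset ℕ) (t : ℝ) : Finset (ℕ × ℕ) :=
  (A ×ˢ A).filter (fun p => (Nat.gcd p.1 p.2 : ℝ) ≤ t)

lemma goodSet_mono (A : Finset ℕ) {t t' : ℝ} (h : t ≤ t') : goodSet A t ⊆ goodSet A t' := by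
  unfold goodSet
  apply Finset.monotone_filter_right
  intro p _ hp
  exact le_trans hp h

lemma goodSet_subset (A : Finset ℕ) (t : ℝ) : goodSet A t ⊆ A ×ˢ A :=
  Finset.filter_subset _ _

lemma goodSet_card (n : ℕ) (A : Finset ℕ) (hA : A ⊆ Finset.Icc 1 n) {t : ℝ} (ht : 1 < t) :
    ((A.card : ℝ)) ^ 2 - (n : ℝ) ^ 2 / (t - 1) ≤ ((goodSet A t).card : ℝ) := by
  classical
  have hpart := Finset.card_filter_add_card_filter_not
    (s := A ×ˢ A) (p := fun p : ℕ × ℕ => (Nat.gcd p.1 p.2 : ℝ) ≤ t)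
  have hbadeq : (A ×ˢ A).filter (fun p : ℕ × ℕ => ¬ ((Nat.gcd p.1 p.2 : ℝ) ≤ t)) =
      (A ×ˢ A).filter (fun p : ℕ × ℕ => t < (Nat.gcd p.1 p.2 : ℝ)) := by
    apply Finset.filter_congr
    intro p _
    simp [not_le]
  rw [hbadeq] at hpart
  have hbad := bad_card_le n A hA t ht
  have hprodcard : ((A ×ˢ A).card : ℝ) = ((A.card : ℝ)) ^ 2 := by
    rw [Finset.card_product]
    push_cast
    ring
  have hcast : ((goodSet A t).card : ℝ) +
      (((A ×ˢ A).filter (fun p : ℕ × ℕ => t < (Nat.gcd p.1 p.2 : ℝ))).card : ℝ)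
      = ((A.card : ℝ)) ^ 2 := by
    rw [← hprodcard]
    rw [goodSet]
    exact_mod_cast congrArg (Nat.cast : ℕ → ℝ) hpart
  linarith

lemma goodSet_sum_le (A : Finset ℕ) {t : ℝ} (ht : 0 < t) (hA1 : ∀ a ∈ A, 1 ≤ a)
    (H : Finset (ℕ × ℕ)) (hH : H ⊆ goodSet A t) :
    (H.card : ℝ) * (1 / t) ≤ ∑ p ∈ H, 1 / (Nat.gcd p.1 p.2 : ℝ) := by
  have hlow : ∀ p ∈ H, 1 / t ≤ 1 / (Nat.gcd p.1 p.2 : ℝ) := by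
    intro p hp
    have hp' := hH hp
    rw [goodSet, Finset.mem_filter] at hp'
    have h1 : 1 ≤ p.1 := hA1 p.1 (Finset.mem_product.mp hp'.1).1
    have hg : 0 < Nat.gcd p.1 p.2 := Nat.gcd_pos_of_pos_left p.2 (by omega)
    have hg1 : (1 : ℝ) ≤ (Nat.gcd p.1 p.2 : ℝ) := by exact_mod_cast hg
    exact one_div_le_one_div_of_le (by linarith) hp'.2
  have := Finset.card_nsmul_le_sum H (fun p => 1 / (Nat.gcd p.1 p.2 : ℝ)) (1 / t) hlow
  rwa [nsmul_eq_mul] at this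

set_option maxHeartbeats 1000000 in
/-- Core combinatorial bound: the sum of 1/gcd over pairs is at least N⁴/(4n²). -/
lemma pairs_sum_lower (n : ℕ) (A : Finset ℕ) (hA : A ⊆ Finset.Icc 1 n)
    (hN0 : 0 < A.card) :
    ((A.card : ℝ)) ^ 4 / (4 * (n : ℝ) ^ 2) ≤ ∑ p ∈ A ×ˢ A, 1 / (Nat.gcd p.1 p.2 : ℝ) := by
  classical
  have hA1 : ∀ a ∈ A, 1 ≤ a := by
    intro a ha
    have := hA ha
    rw [Finset.mem_Icc] at this
    exact this.1
  have hNlen : A.card ≤ n := by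
    have := Finset.card_le_card hA
    rwa [Nat.card_Icc, Nat.add_sub_cancel] at this
  have hNR : (0 : ℝ) < (A.card : ℝ) := by exact_mod_cast hN0
  have hnR : (0 : ℝ) < (n : ℝ) := by
    have : 0 < n := lt_of_lt_of_le hN0 hNlen
    exact_mod_cast this
  have hNn : (A.card : ℝ) ≤ (n : ℝ) := by exact_mod_cast hNlen
  set NR : ℝ := (A.card : ℝ) with hNRdef
  set u : ℝ := NR ^ 2 with hu
  have hupos : (0 : ℝ) < u := by positivity
  set τ : ℝ := (n : ℝ) ^ 2 / u with hτdef
  have hτpos : (0 : ℝ) < τ := by positivity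
  have hτ1 : (1 : ℝ) ≤ τ := by
    rw [hτdef, le_div_iff₀ hupos, one_mul, hu, hNRdef]
    nlinarith
  have hτu : τ * u = (n : ℝ) ^ 2 := by
    rw [hτdef, div_mul_cancel₀ _ hupos.ne']
  clear_value NR u τ
  -- good-set cardinality bounds for the five levels
  have hglevel : ∀ c : ℝ, 2 < c → u * ((c - 2) / (c - 1)) ≤ ((goodSet A (c * τ)).card : ℝ) := by
    intro c hc
    have ht1 : (1 : ℝ) < c * τ := by nlinarith
    have h1 := goodSet_card n A hA ht1
    have h2 : (c - 1) * τ ≤ c * τ - 1 := by nlinarith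
    have hc1τ : (0 : ℝ) < (c - 1) * τ := by nlinarith
    have hstep : (n : ℝ) ^ 2 / (c * τ - 1) ≤ (n : ℝ) ^ 2 / ((c - 1) * τ) :=
      div_le_div_of_nonneg_left (by positivity) hc1τ h2
    have heq : (n : ℝ) ^ 2 / ((c - 1) * τ) = u / (c - 1) := by
      rw [← hτu, mul_comm (c - 1) τ, mul_div_mul_left _ _ (ne_of_gt hτpos)]
    have hc1 : (0 : ℝ) < c - 1 := by linarith
    have hfact : u * ((c - 2) / (c - 1)) = u - u / (c - 1) := by
      field_simp
      ring
    rw [heq] at hstep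
    rw [← hNRdef, ← hu] at h1
    linarith
  have hg1 := hglevel (9/4) (by norm_num)
  have hg2 := hglevel (11/4) (by norm_num)
  have hg3 := hglevel (7/2) (by norm_num)
  have hg4 := hglevel (5) (by norm_num)
  have hg5 := hglevel (9) (by norm_num)
  norm_num at hg1 hg2 hg3 hg4 hg5
  -- inclusions
  have h12 : goodSet A (9/4 * τ) ⊆ goodSet A (11/4 * τ) := goodSet_mono A (by nlinarith)
  have h23 : goodSet A (11/4 * τ) ⊆ goodSet A (7/2 * τ) := goodSet_mono A (by nlinarith)
  have h34 : goodSet A (7/2 * τ) ⊆ goodSet A (5 * τ) := goodSet_mono A (by nlinarith)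
  have h45 : goodSet A (5 * τ) ⊆ goodSet A (9 * τ) := goodSet_mono A (by nlinarith)
  -- sum lower bounds
  have hS1 : ((goodSet A (9/4 * τ)).card : ℝ) * (1 / (9/4 * τ)) ≤
      ∑ p ∈ goodSet A (9/4 * τ), 1 / (Nat.gcd p.1 p.2 : ℝ) :=
    goodSet_sum_le A (by positivity) hA1 _ (Finset.Subset.refl _)
  have hdiff : ∀ t t' : ℝ, 0 < t' → goodSet A t ⊆ goodSet A t' →
      (((goodSet A t').card : ℝ) - ((goodSet A t).card : ℝ)) * (1 / t') ≤
        ∑ p ∈ goodSet A t' \ goodSet A t, 1 / (Nat.gcd p.1 p.2 : ℝ) := by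
    intro t t' ht' hsub
    have h1 := goodSet_sum_le A ht' hA1 (goodSet A t' \ goodSet A t) (Finset.sdiff_subset)
    have h2 : ((goodSet A t' \ goodSet A t).card : ℝ)
        = ((goodSet A t').card : ℝ) - ((goodSet A t).card : ℝ) := by
      rw [Finset.card_sdiff_of_subset hsub]
      have hle := Finset.card_le_card hsub
      push_cast [hle]
      ring
    rw [h2] at h1
    exact h1
  have hd2 := hdiff _ _ (by positivity : (0:ℝ) < 11/4 * τ) h12
  have hd3 := hdiff _ _ (by positivity : (0:ℝ) < 7/2 * τ) h23
  have hd4 := hdiff _ _ (by positivity : (0:ℝ) < 5 * τ) h34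
  have hd5 := hdiff _ _ (by positivity : (0:ℝ) < 9 * τ) h45
  -- splitting sums
  have hsplit2 := Finset.sum_sdiff (f := fun p : ℕ × ℕ => 1 / (Nat.gcd p.1 p.2 : ℝ)) h12
  have hsplit3 := Finset.sum_sdiff (f := fun p : ℕ × ℕ => 1 / (Nat.gcd p.1 p.2 : ℝ)) h23
  have hsplit4 := Finset.sum_sdiff (f := fun p : ℕ × ℕ => 1 / (Nat.gcd p.1 p.2 : ℝ)) h34
  have hsplit5 := Finset.sum_sdiff (f := fun p : ℕ × ℕ => 1 / (Nat.gcd p.1 p.2 : ℝ)) h45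
  have hStop : ∑ p ∈ goodSet A (9 * τ), 1 / (Nat.gcd p.1 p.2 : ℝ) ≤
      ∑ p ∈ A ×ˢ A, 1 / (Nat.gcd p.1 p.2 : ℝ) := by
    apply Finset.sum_le_sum_of_subset_of_nonneg (goodSet_subset A _)
    intro p _ _
    positivity
  -- abbreviations for the five cards
  have key : u / 4 * (1 / τ) ≤ ∑ p ∈ A ×ˢ A, 1 / (Nat.gcd p.1 p.2 : ℝ) := by
    have expand : ∀ a b c d e : ℝ,
        a * (1 / (9/4 * τ)) + (b - a) * (1 / (11/4 * τ)) + (c - b) * (1 / (7/2 * τ)) +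
        (d - c) * (1 / (5 * τ)) + (e - d) * (1 / (9 * τ)) =
        (a * (4/9 - 4/11) + b * (4/11 - 2/7) + c * (2/7 - 1/5) + d * (1/5 - 1/9) + e * (1/9))
          * (1 / τ) := by
      intro a b c d e
      field_simp
      ring
    have hcomb := expand ((goodSet A (9/4 * τ)).card : ℝ) ((goodSet A (11/4 * τ)).card : ℝ)
      ((goodSet A (7/2 * τ)).card : ℝ) ((goodSet A (5 * τ)).card : ℝ)
      ((goodSet A (9 * τ)).card : ℝ)
    have hsum : (((goodSet A (9/4 * τ)).card : ℝ) * (4/9 - 4/11) +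
        ((goodSet A (11/4 * τ)).card : ℝ) * (4/11 - 2/7) +
        ((goodSet A (7/2 * τ)).card : ℝ) * (2/7 - 1/5) +
        ((goodSet A (5 * τ)).card : ℝ) * (1/5 - 1/9) +
        ((goodSet A (9 * τ)).card : ℝ) * (1/9)) * (1 / τ) ≤
        ∑ p ∈ A ×ˢ A, 1 / (Nat.gcd p.1 p.2 : ℝ) := by
      rw [← hcomb]
      linarith [hS1, hd2, hd3, hd4, hd5, hsplit2, hsplit3, hsplit4, hsplit5, hStop]
    have hquarter : u / 4 ≤ ((goodSet A (9/4 * τ)).card : ℝ) * (4/9 - 4/11) +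
        ((goodSet A (11/4 * τ)).card : ℝ) * (4/11 - 2/7) +
        ((goodSet A (7/2 * τ)).card : ℝ) * (2/7 - 1/5) +
        ((goodSet A (5 * τ)).card : ℝ) * (1/5 - 1/9) +
        ((goodSet A (9 * τ)).card : ℝ) * (1/9) := by
      linarith [hg1, hg2, hg3, hg4, hg5]
    calc u / 4 * (1 / τ) ≤ _ * (1 / τ) :=
          mul_le_mul_of_nonneg_right hquarter (by positivity)
      _ ≤ _ := hsum
  have hfin : u / 4 * (1 / τ) = NR ^ 4 / (4 * (n : ℝ) ^ 2) := by
    rw [hτdef, hu]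
    field_simp
  rw [← hfin]
  exact key

/-- For every `ε > 0` and `κ > 0` and every integer `q > 1`: if `A ⊆ {1,…,q²}` with
`#A ≥ κ·q^(2-ε)`, then `Σ_{(r₁,r₂,r₃) ∈ A³} 1/gcd(r₁,r₂) ≥ (κ⁶/4)·q^(6-6ε)`. -/
theorem sum_inv_gcd_lower :
    ∀ ε : ℝ, 0 < ε → ∀ κ : ℝ, 0 < κ → ∀ q : ℕ, 1 < q →
      ∀ A : Finset ℕ, A ⊆ Finset.Icc 1 (q ^ 2) →
        κ * (q : ℝ) ^ ((2 : ℝ) - ε) ≤ (A.card : ℝ) →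
        κ ^ 6 / 4 * (q : ℝ) ^ ((6 : ℝ) - 6 * ε) ≤
          ∑ r₁ ∈ A, ∑ r₂ ∈ A, ∑ r₃ ∈ A, 1 / (Nat.gcd r₁ r₂ : ℝ) := by
  intro ε hε κ hκ q hq A hA hcard
  classical
  have hqR : (1 : ℝ) < (q : ℝ) := by exact_mod_cast hq
  have hq0 : (0 : ℝ) < (q : ℝ) := by linarith
  have hrppos : (0 : ℝ) < κ * (q : ℝ) ^ ((2 : ℝ) - ε) :=
    mul_pos hκ (Real.rpow_pos_of_pos hq0 _)
  have hN0 : (0 : ℝ) < (A.card : ℝ) := lt_of_lt_of_le hrppos hcard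
  have hNpos : 0 < A.card := by exact_mod_cast hN0
  have hNle : (A.card : ℝ) ≤ (q : ℝ) ^ 2 := by
    have h1 : A.card ≤ q ^ 2 := by
      have := Finset.card_le_card hA
      rwa [Nat.card_Icc, Nat.add_sub_cancel] at this
    exact_mod_cast h1
  have hpairs := pairs_sum_lower (q ^ 2) A hA hNpos
  have hq2cast : (((q ^ 2 : ℕ) : ℝ)) = (q : ℝ) ^ 2 := by push_cast; ring
  rw [hq2cast] at hpairs
  -- convert triple sum
  have htriple : ∑ r₁ ∈ A, ∑ r₂ ∈ A, ∑ r₃ ∈ A, 1 / (Nat.gcd r₁ r₂ : ℝ)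
      = (A.card : ℝ) * ∑ p ∈ A ×ˢ A, 1 / (Nat.gcd p.1 p.2 : ℝ) := by
    rw [Finset.sum_product, Finset.mul_sum]
    apply Finset.sum_congr rfl
    intro r₁ _
    rw [Finset.mul_sum]
    apply Finset.sum_congr rfl
    intro r₂ _
    rw [Finset.sum_const, nsmul_eq_mul]
  -- power manipulations
  have h6 : κ ^ 6 * (q : ℝ) ^ ((6 : ℝ) - 6 * ε) * (q : ℝ) ^ 6 ≤ (A.card : ℝ) ^ 6 := by
    have hp6 : (κ * (q : ℝ) ^ ((2 : ℝ) - ε)) ^ 6 ≤ (A.card : ℝ) ^ 6 :=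
      pow_le_pow_left₀ hrppos.le hcard 6
    have hrw : ((q : ℝ) ^ ((2 : ℝ) - ε)) ^ 6 = (q : ℝ) ^ ((6 : ℝ) - 6 * ε) * (q : ℝ) ^ 6 := by
      rw [← Real.rpow_natCast ((q : ℝ) ^ ((2 : ℝ) - ε)) 6, ← Real.rpow_mul hq0.le]
      rw [show ((2 : ℝ) - ε) * ((6 : ℕ) : ℝ) = ((6 : ℝ) - 6 * ε) + (6 : ℝ) by push_cast; ring]
      rw [Real.rpow_add hq0]
      congr 1
      rw [show ((6 : ℝ)) = ((6 : ℕ) : ℝ) by push_cast; ring, Real.rpow_natCast]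
    calc κ ^ 6 * (q : ℝ) ^ ((6 : ℝ) - 6 * ε) * (q : ℝ) ^ 6
        = κ ^ 6 * ((q : ℝ) ^ ((2 : ℝ) - ε)) ^ 6 := by rw [hrw]; ring
      _ = (κ * (q : ℝ) ^ ((2 : ℝ) - ε)) ^ 6 := by ring
      _ ≤ (A.card : ℝ) ^ 6 := hp6
  rw [htriple]
  have hfinal1 : κ ^ 6 / 4 * (q : ℝ) ^ ((6 : ℝ) - 6 * ε) ≤
      (A.card : ℝ) ^ 6 / (4 * (q : ℝ) ^ 6) := by
    rw [div_mul_eq_mul_div, div_le_div_iff₀ (by norm_num) (by positivity)]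
    nlinarith [h6]
  have hfinal2 : (A.card : ℝ) ^ 6 / (4 * (q : ℝ) ^ 6) ≤
      (A.card : ℝ) ^ 5 / (4 * (q : ℝ) ^ 4) := by
    rw [div_le_div_iff₀ (by positivity) (by positivity)]
    have h1 : (0 : ℝ) ≤ (A.card : ℝ) ^ 5 * (q : ℝ) ^ 4 := by positivity
    nlinarith [mul_le_mul_of_nonneg_left hNle h1]
  have hfinal3 : (A.card : ℝ) ^ 5 / (4 * (q : ℝ) ^ 4) ≤
      (A.card : ℝ) * ((A.card : ℝ) ^ 4 / (4 * ((q : ℝ) ^ 2) ^ 2)) := by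
    have : (A.card : ℝ) * ((A.card : ℝ) ^ 4 / (4 * ((q : ℝ) ^ 2) ^ 2)) =
        (A.card : ℝ) ^ 5 / (4 * (q : ℝ) ^ 4) := by
      ring
    linarith [this.le, this.ge]
  have hfinal4 : (A.card : ℝ) * ((A.card : ℝ) ^ 4 / (4 * ((q : ℝ) ^ 2) ^ 2)) ≤
      (A.card : ℝ) * ∑ p ∈ A ×ˢ A, 1 / (Nat.gcd p.1 p.2 : ℝ) :=
    mul_le_mul_of_nonneg_left hpairs hN0.le
  linarith
end
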